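/- arXiv:2103.08085 — 4 statements merged into one kernel-verified Lean document; each statement's English description precedes it below -/
import Mathlib

section
/- Let $k \ge 3$ and let $X$ be a set of roots of the root system of type $A_{k-1}^t$ (the orthogonal sum of $t$ copies of $A_{k-1}$) such that $(\alpha|\beta) \in \{0,-1\}$ for all distinct $\alpha,\beta \in X$. Then $|X| \le tk$. -/
lemma root_struct {k t : ℕ} (a : Fin t → Fin k → ℤ)
    (h0 : ∀ b, ∑ i, a b i = 0) (h2 : ∑ b, ∑ i, a b i * a b i = 2) :
    ∃ b i j, i ≠ j ∧ a b i = 1 ∧ a b j = -1 ∧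
      ∀ b' i', ¬(b' = b ∧ i' = i) → ¬(b' = b ∧ i' = j) → a b' i' = 0 := by
  classical
  have hsum : ∑ p : Fin t × Fin k, a p.1 p.2 * a p.1 p.2 = 2 := by
    rw [Fintype.sum_prod_type]; exact h2
  have hb : ∀ b i, a b i * a b i ≤ 2 := by
    intro b i
    calc a b i * a b i ≤ ∑ p : Fin t × Fin k, a p.1 p.2 * a p.1 p.2 := by
          exact Finset.single_le_sum (f := fun p : Fin t × Fin k => a p.1 p.2 * a p.1 p.2)
            (fun p _ => mul_self_nonneg _) (Finset.mem_univ (b, i))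
      _ = 2 := hsum
  have hval : ∀ b i, a b i = -1 ∨ a b i = 0 ∨ a b i = 1 := by
    intro b i
    have h1 : a b i ≤ 1 := by nlinarith [hb b i]
    have h2' : -1 ≤ a b i := by nlinarith [hb b i]
    omega
  set T : Finset (Fin t × Fin k) := Finset.univ.filter (fun p => a p.1 p.2 ≠ 0) with hT
  have hcardZ : (T.card : ℤ) = 2 := by
    rw [hT, ← Finset.sum_boole]
    rw [← hsum]
    apply Finset.sum_congr rfl
    intro p _
    rcases hval p.1 p.2 with h | h | h <;> simp [h]
  have hcard : T.card = 2 := by exact_mod_cast hcardZ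
  obtain ⟨p, q, hpq, hTpq⟩ := Finset.card_eq_two.mp hcard
  have hmem : ∀ r : Fin t × Fin k, a r.1 r.2 ≠ 0 ↔ (r = p ∨ r = q) := by
    intro r
    have : r ∈ T ↔ r ∈ ({p, q} : Finset (Fin t × Fin k)) := by rw [hTpq]
    simpa [hT, Finset.mem_filter] using this
  have hzero : ∀ r : Fin t × Fin k, r ≠ p → r ≠ q → a r.1 r.2 = 0 := by
    intro r h1 h2
    by_contra h
    rcases (hmem r).mp h with h' | h' <;> [exact h1 h'; exact h2 h']
  have hap : a p.1 p.2 ≠ 0 := (hmem p).mpr (Or.inl rfl)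
  have haq : a q.1 q.2 ≠ 0 := (hmem q).mpr (Or.inr rfl)
  have hb1 : p.1 = q.1 := by
    by_contra hne
    have : ∑ i, a p.1 i = a p.1 p.2 := by
      apply Finset.sum_eq_single p.2
      · intro i _ hi
        exact hzero (p.1, i) (by simp [Prod.ext_iff, hi]) (by simp [Prod.ext_iff, hne])
      · intro h; exact absurd (Finset.mem_univ _) h
    exact hap (by rw [← this, h0 p.1])
  have hi2 : p.2 ≠ q.2 := by
    intro h
    exact hpq (Prod.ext hb1 h)
  have hsum2 : a p.1 p.2 + a p.1 q.2 = 0 := by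
    have hsub : ∑ i ∈ ({p.2, q.2} : Finset (Fin k)), a p.1 i = ∑ i, a p.1 i := by
      apply Finset.sum_subset (Finset.subset_univ _)
      intro i _ hi
      simp only [Finset.mem_insert, Finset.mem_singleton, not_or] at hi
      exact hzero (p.1, i) (by simp [Prod.ext_iff, hi.1]) (by simp [Prod.ext_iff, hb1, hi.2])
    rw [Finset.sum_pair hi2] at hsub
    rw [hsub, h0]
  rcases hval p.1 p.2 with h | h | h
  · -- a p = -1, so a q = 1 : witnesses (p.1, q.2, p.2)
    refine ⟨p.1, q.2, p.2, hi2.symm, by omega, h, ?_⟩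
    intro b' i' h1 h2
    apply hzero (b', i')
    · intro he; exact h2 (Prod.ext_iff.mp he)
    · intro he
      obtain ⟨he1, he2⟩ := Prod.ext_iff.mp he
      exact h1 ⟨he1.trans hb1.symm, he2⟩
  · exact absurd h hap
  · refine ⟨p.1, p.2, q.2, hi2, h, by omega, ?_⟩
    intro b' i' h1 h2
    apply hzero (b', i')
    · intro he; exact h1 (Prod.ext_iff.mp he)
    · intro he
      obtain ⟨he1, he2⟩ := Prod.ext_iff.mp he
      exact h2 ⟨he1.trans hb1.symm, he2⟩

/-- Let `k ≥ 3` and let `X` be a set of roots of the root system of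
type `A_{k-1}^t` (the norm-2 vectors of the orthogonal sum of `t` copies of the
root lattice of type `A_{k-1}`) such that `(α|β) ∈ {0, -1}` for all distinct
`α, β ∈ X`.  Then `|X| ≤ t k`. -/
theorem stmt_8 {k t : ℕ} (hk : 3 ≤ k) (X : Finset (Fin t → Fin k → ℤ))
    (hroot : ∀ a ∈ X, (∀ b, ∑ i, a b i = 0) ∧ ∑ b, ∑ i, a b i * a b i = 2)
    (hpair : ∀ a ∈ X, ∀ c ∈ X, a ≠ c →
      (∑ b, ∑ i, a b i * c b i = 0 ∨ ∑ b, ∑ i, a b i * c b i = -1)) :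
    X.card ≤ t * k := by
  classical
  rcases Nat.eq_zero_or_pos t with ht | ht
  · subst ht
    have hX : X = ∅ := by
      apply Finset.eq_empty_of_forall_notMem
      intro a ha
      have := (hroot a ha).2
      simp at this
    simp [hX]
  have : Nonempty (Fin t × Fin k) := ⟨⟨⟨0, ht⟩, ⟨0, by omega⟩⟩⟩
  set f : (Fin t → Fin k → ℤ) → Fin t × Fin k :=
    fun a => if h : ∃ p : Fin t × Fin k, a p.1 p.2 = 1 then h.choose else Classical.arbitrary _
    with hf
  have key : ∀ a ∈ X, ∃ b i j, i ≠ j ∧ a b i = 1 ∧ a b j = -1 ∧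
      (∀ b' i', ¬(b' = b ∧ i' = i) → ¬(b' = b ∧ i' = j) → a b' i' = 0) ∧ f a = (b, i) := by
    intro a ha
    obtain ⟨b, i, j, hij, h1, h2, h0⟩ := root_struct a (hroot a ha).1 (hroot a ha).2
    have hex : ∃ p : Fin t × Fin k, a p.1 p.2 = 1 := ⟨(b, i), h1⟩
    have huniq : ∀ p : Fin t × Fin k, a p.1 p.2 = 1 → p = (b, i) := by
      intro p hp
      by_contra hne
      have hne2 : ¬(p.1 = b ∧ p.2 = i) := fun hh => hne (Prod.ext hh.1 hh.2)
      by_cases hj : p.1 = b ∧ p.2 = j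
      · rw [hj.1, hj.2, h2] at hp; omega
      · rw [h0 p.1 p.2 hne2 hj] at hp; omega
    refine ⟨b, i, j, hij, h1, h2, h0, ?_⟩
    rw [hf]
    simp only [dif_pos hex]
    exact huniq _ hex.choose_spec
  have hinj : Set.InjOn f X := by
    intro a ha c hc hfac
    by_contra hne
    obtain ⟨b, i, j, hij, ha1, ha2, ha0, hfa⟩ := key a ha
    obtain ⟨b', i', j', hij', hc1, hc2, hc0, hfc⟩ := key c hc
    rw [hfa, hfc] at hfac
    obtain ⟨hbb, hii⟩ := Prod.ext_iff.mp hfac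
    subst hbb; subst hii
    -- if j = j' then a = c
    have hjj : j ≠ j' := by
      intro h
      subst h
      apply hne
      funext b'' i''
      by_cases h1 : b'' = b ∧ i'' = i
      · rw [h1.1, h1.2, ha1, hc1]
      · by_cases h2 : b'' = b ∧ i'' = j
        · rw [h2.1, h2.2, ha2, hc2]
        · rw [ha0 _ _ h1 h2, hc0 _ _ h1 h2]
    -- inner product is 1
    have hterm : ∀ b'' i'', a b'' i'' * c b'' i'' = if b'' = b ∧ i'' = i then 1 else 0 := by
      intro b'' i''
      by_cases h1 : b'' = b ∧ i'' = i
      · rw [if_pos h1, h1.1, h1.2, ha1, hc1]; norm_num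
      · rw [if_neg h1]
        by_cases h2 : b'' = b ∧ i'' = j
        · have : c b'' i'' = 0 := by
            apply hc0 _ _ h1
            intro hh
            exact hjj (hh.2.symm.trans h2.2).symm
          rw [this, mul_zero]
        · rw [ha0 _ _ h1 h2, zero_mul]
    have hip : ∑ b'', ∑ i'', a b'' i'' * c b'' i'' = 1 := by
      simp only [hterm, ite_and]
      simp [Finset.sum_ite_eq']
    rcases hpair a ha c hc hne with h | h <;> omega
  calc X.card ≤ (Finset.univ : Finset (Fin t × Fin k)).card :=
        Finset.card_le_card_of_injOn f (fun _ _ => Finset.mem_univ _) hinj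
    _ = t * k := by simp
end

section
/- Let $p$ be an odd prime, $\Delta_i$ a base of the root system of the $i$-th copy of $A_{p-1}$ in $R = A_{p-1}^{\perp t}$, and $\chi_\Delta = \frac{1}{p}(\rho_{\Delta_1},\dots,\rho_{\Delta_t})$ where $\rho_{\Delta_i}$ is the Weyl vector. Then for any $x \in \mathbb{Z}_p^t$, $(\lambda_x|\lambda_x) \in 2\mathbb{Z}$ if and only if $(\lambda_x|\chi_\Delta) \in \mathbb{Z}$. -/
/-- The coset representative `λ_x ∈ R*` associated with `x ∈ (ℤ/p)^t`: its `b`-th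
block is the fundamental weight `λ_{x_b}` of `A_{p-1}`, whose first `x_b`
coordinates are `(p - x_b)/p` and remaining coordinates are `-x_b/p`. -/
def lam (p t : ℕ) (x : Fin t → ZMod p) : Fin t → Fin p → ℚ :=
  fun b i => if (i : ℕ) < (x b).val then ((p : ℚ) - (x b).val) / p
    else -((x b).val : ℚ) / p

/-- The vector `χ_Δ = (ρ_{Δ_1}/p, …, ρ_{Δ_t}/p)`, where `ρ_Δ` is the Weyl vector of
`A_{p-1}`, with coordinates `(p - 1 - 2 i)/2` (0-indexed). -/
def chi (p t : ℕ) : Fin t → Fin p → ℚ :=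
  fun _ i => ((p : ℚ) - 1 - 2 * ((i : ℕ) : ℚ)) / (2 * p)

lemma gauss (a : ℕ) : (∑ i ∈ Finset.range a, (i:ℚ)) * 2 = a * (a - 1) := by
  rcases a with _ | n
  · simp
  · have h := Finset.sum_range_id_mul_two (n+1)
    have := congrArg (Nat.cast : ℕ → ℚ) h
    push_cast at this
    rw [this]
    push_cast
    ring

lemma block (p a : ℕ) (hp : 0 < p) (ha : a ≤ p) :
    ∑ i ∈ Finset.range p,
      (if i < a then ((p:ℚ) - a)/p else -(a:ℚ)/p) * (((p:ℚ) - 1 - 2*i)/(2*p))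
  = (∑ i ∈ Finset.range p,
      (if i < a then ((p:ℚ) - a)/p else -(a:ℚ)/p)
        * (if i < a then ((p:ℚ) - a)/p else -(a:ℚ)/p)) / 2 := by
  have hP : (p:ℚ) ≠ 0 := Nat.cast_ne_zero.mpr hp.ne'
  have hpa : ((p - a : ℕ) : ℚ) = (p:ℚ) - a := by push_cast [Nat.cast_sub ha]; ring
  have hsplit : ∀ f : ℕ → ℚ, ∑ i ∈ Finset.range p, f i
      = ∑ i ∈ Finset.range a, f i + ∑ i ∈ Finset.Ico a p, f i := by
    intro f
    rw [Finset.range_eq_Ico, ← Finset.sum_Ico_consecutive _ (Nat.zero_le a) ha, Finset.range_eq_Ico]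
  rw [hsplit, hsplit]
  have h1 : ∀ f : ℕ → ℚ, ∑ i ∈ Finset.range a,
      (if i < a then ((p:ℚ) - a)/p else -(a:ℚ)/p) * f i
      = ((p:ℚ) - a)/p * ∑ i ∈ Finset.range a, f i := by
    intro f
    rw [Finset.mul_sum]
    exact Finset.sum_congr rfl fun i hi => by rw [if_pos (Finset.mem_range.mp hi)]
  have h2 : ∀ f : ℕ → ℚ, ∑ i ∈ Finset.Ico a p,
      (if i < a then ((p:ℚ) - a)/p else -(a:ℚ)/p) * f i
      = (-(a:ℚ)/p) * ∑ i ∈ Finset.Ico a p, f i := by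
    intro f
    rw [Finset.mul_sum]
    exact Finset.sum_congr rfl fun i hi =>
      by rw [if_neg (Nat.not_lt.mpr (Finset.mem_Ico.mp hi).1)]
  rw [h1, h2, h1, h2]
  have hga := gauss a
  have hgp := gauss p
  have hIco : ∑ i ∈ Finset.Ico a p, (i:ℚ)
      = ∑ i ∈ Finset.range p, (i:ℚ) - ∑ i ∈ Finset.range a, (i:ℚ) := by
    have := hsplit (fun i => (i:ℚ))
    linarith [this]
  have S1 : ∑ i ∈ Finset.range a, ((p:ℚ) - 1 - 2*i)/(2*p)
      = ((a:ℚ) * ((p:ℚ)-1) - (a:ℚ)*((a:ℚ)-1)) / (2*p) := by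
    rw [← Finset.sum_div]
    congr 1
    rw [Finset.sum_sub_distrib, Finset.sum_const, Finset.card_range, ← Finset.mul_sum,
      nsmul_eq_mul]
    linarith [hga]
  have S2 : ∑ i ∈ Finset.Ico a p, ((p:ℚ) - 1 - 2*i)/(2*p)
      = (((p:ℚ)-(a:ℚ)) * ((p:ℚ)-1) - ((p:ℚ)*((p:ℚ)-1) - (a:ℚ)*((a:ℚ)-1))) / (2*p) := by
    rw [← Finset.sum_div]
    congr 1
    rw [Finset.sum_sub_distrib, Finset.sum_const, Nat.card_Ico, ← Finset.mul_sum, hIco,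
      nsmul_eq_mul, hpa]
    linarith [hga, hgp]
  rw [S1, S2]
  have C1 : ∑ i ∈ Finset.range a, (if i < a then ((p:ℚ) - a)/p else -(a:ℚ)/p)
      = (a:ℚ) * (((p:ℚ) - a)/p) := by
    rw [Finset.sum_congr rfl fun i hi => if_pos (Finset.mem_range.mp hi),
      Finset.sum_const, Finset.card_range, nsmul_eq_mul]
  have C2 : ∑ i ∈ Finset.Ico a p, (if i < a then ((p:ℚ) - a)/p else -(a:ℚ)/p)
      = ((p:ℚ) - a) * (-(a:ℚ)/p) := by
    rw [Finset.sum_congr rfl fun i hi => if_neg (Nat.not_lt.mpr (Finset.mem_Ico.mp hi).1),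
      Finset.sum_const, Nat.card_Ico, nsmul_eq_mul, hpa]
  rw [C1, C2]
  field_simp
  ring

/-- For an odd prime `p` and any `x ∈ (ℤ/p)^t`,
`(λ_x | λ_x) ∈ 2ℤ` if and only if `(λ_x | χ_Δ) ∈ ℤ`. -/
theorem stmt_11 (p t : ℕ) (hp : p.Prime) (hodd : Odd p) (x : Fin t → ZMod p) :
    (∃ m : ℤ, ∑ b, ∑ i, lam p t x b i * lam p t x b i = 2 * m) ↔
      ∃ m : ℤ, ∑ b, ∑ i, lam p t x b i * chi p t b i = m := by
  haveI : NeZero p := ⟨hp.ne_zero⟩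
  have key : ∑ b, ∑ i, lam p t x b i * chi p t b i
      = (∑ b, ∑ i, lam p t x b i * lam p t x b i) / 2 := by
    rw [Finset.sum_div]
    refine Finset.sum_congr rfl fun b _ => ?_
    have hb : (x b).val ≤ p := ((x b).val_lt).le
    have e1 : ∑ i, lam p t x b i * chi p t b i
        = ∑ i ∈ Finset.range p,
          (if i < (x b).val then ((p:ℚ) - (x b).val)/p else -((x b).val:ℚ)/p)
            * (((p:ℚ) - 1 - 2*i)/(2*p)) := by
      rw [← Fin.sum_univ_eq_sum_range]
      exact Finset.sum_congr rfl fun i _ => by simp [lam, chi]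
    have e2 : ∑ i, lam p t x b i * lam p t x b i
        = ∑ i ∈ Finset.range p,
          (if i < (x b).val then ((p:ℚ) - (x b).val)/p else -((x b).val:ℚ)/p)
            * (if i < (x b).val then ((p:ℚ) - (x b).val)/p else -((x b).val:ℚ)/p) := by
      rw [← Fin.sum_univ_eq_sum_range]
      exact Finset.sum_congr rfl fun i _ => by simp [lam]
    rw [e1, e2, block p (x b).val hp.pos hb]
  rw [key]
  constructor
  · rintro ⟨m, hm⟩
    refine ⟨m, ?_⟩
    rw [hm]
    ring
  · rintro ⟨m, hm⟩
    refine ⟨m, ?_⟩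
    have h2 : (∑ b, ∑ i, lam p t x b i * lam p t x b i) / 2 = (m:ℚ) := hm
    linarith [h2]
end

section
/- An even lattice $L$ is isometric to $L_A(C)$ for some self-orthogonal code $C$ of length $t$ over an odd prime field $\mathbb{Z}_p$ if and only if $L$ contains a full sublattice isometric to the orthogonal sum of $t$ copies of the root lattice of type $A_{p-1}$. -/
def LA (p t : ℕ) (C : Set (Fin t → ZMod p)) : Set (Fin t → Fin p → ℚ) :=
  {α | (∀ b, ∑ i, α b i = 0) ∧
    ∃ c ∈ C, ∀ b i, ∃ m : ℤ, α b i = (m : ℚ) - ((c b).val : ℚ) / p}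

lemma frac_iff {p : ℕ} [NeZero p] (q : ℚ) (x : ZMod p) :
    (∃ m : ℤ, q = (m : ℚ) - (x.val : ℚ) / p) ↔ ∃ z : ℤ, q = z / p ∧ (z : ZMod p) = -x := by
  have hp : (p : ℚ) ≠ 0 := Nat.cast_ne_zero.mpr (NeZero.ne p)
  constructor
  · rintro ⟨m, rfl⟩
    refine ⟨m * p - x.val, by field_simp; norm_cast, ?_⟩
    push_cast
    rw [ZMod.natCast_self, ZMod.natCast_zmod_val]
    ring
  · rintro ⟨z, rfl, hz⟩
    have : ((z + x.val : ℤ) : ZMod p) = 0 := by push_cast [ZMod.natCast_zmod_val, hz]; ring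
    obtain ⟨m, hm⟩ := (ZMod.intCast_zmod_eq_zero_iff_dvd _ _).mp this
    refine ⟨m, ?_⟩
    have h2 : (z : ℚ) = p * m - x.val := by
      have := congrArg (Int.cast : ℤ → ℚ) hm
      push_cast at this
      linarith
    rw [h2, sub_div, mul_div_cancel_left₀ _ hp]

lemma mem_LA_iff {p t : ℕ} [NeZero p] (C : Set (Fin t → ZMod p)) (α : Fin t → Fin p → ℚ) :
    α ∈ LA p t C ↔ (∀ b, ∑ i, α b i = 0) ∧
      ∃ c ∈ C, ∀ b i, ∃ z : ℤ, α b i = z / p ∧ (z : ZMod p) = -(c b) := by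
  unfold LA
  simp only [Set.mem_setOf_eq]
  constructor
  · rintro ⟨h1, c, hc, h2⟩
    exact ⟨h1, c, hc, fun b i => (frac_iff _ _).mp (h2 b i)⟩
  · rintro ⟨h1, c, hc, h2⟩
    exact ⟨h1, c, hc, fun b i => (frac_iff _ _).mpr (h2 b i)⟩

def LAsub {p t : ℕ} [NeZero p] (C : AddSubgroup (Fin t → ZMod p)) :
    AddSubgroup (Fin t → Fin p → ℚ) where
  carrier := LA p t ↑C
  zero_mem' := (mem_LA_iff _ _).mpr ⟨by simp, 0, zero_mem C,
    fun b i => ⟨0, by simp, by simp⟩⟩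
  add_mem' := by
    intro α β hα hβ
    obtain ⟨h1, c, hc, h2⟩ := (mem_LA_iff _ _).mp hα
    obtain ⟨g1, d, hd, g2⟩ := (mem_LA_iff _ _).mp hβ
    refine (mem_LA_iff _ _).mpr ⟨fun b => ?_, c + d, add_mem hc hd, fun b i => ?_⟩
    · simp only [Pi.add_apply, Finset.sum_add_distrib, h1 b, g1 b, add_zero]
    · obtain ⟨z, hz1, hz2⟩ := h2 b i
      obtain ⟨w, hw1, hw2⟩ := g2 b i
      refine ⟨z + w, by simp [Pi.add_apply, hz1, hw1, add_div], ?_⟩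
      push_cast [hz2, hw2]
      rw [Pi.add_apply, neg_add]
  neg_mem' := by
    intro α hα
    obtain ⟨h1, c, hc, h2⟩ := (mem_LA_iff _ _).mp hα
    refine (mem_LA_iff _ _).mpr ⟨fun b => ?_, -c, neg_mem hc, fun b i => ?_⟩
    · simp only [Pi.neg_apply, Finset.sum_neg_distrib, h1 b, neg_zero]
    · obtain ⟨z, hz1, hz2⟩ := h2 b i
      refine ⟨-z, by simp [hz1, neg_div], ?_⟩
      push_cast [hz2]
      simp

lemma mem_closure_LA_iff {p t : ℕ} [NeZero p] (C : AddSubgroup (Fin t → ZMod p))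
    (α : Fin t → Fin p → ℚ) :
    α ∈ AddSubgroup.closure (LA p t ↑C) ↔ (∀ b, ∑ i, α b i = 0) ∧
      ∃ c ∈ C, ∀ b i, ∃ z : ℤ, α b i = z / p ∧ (z : ZMod p) = -(c b) := by
  have : AddSubgroup.closure (LA p t ↑C) = LAsub C := AddSubgroup.closure_eq (LAsub C)
  rw [this]
  exact mem_LA_iff (↑C) α

def Rsub (p t : ℕ) : AddSubgroup (Fin t → Fin p → ℤ) where
  carrier := {a | ∀ s, ∑ i, a s i = 0}
  zero_mem' := by simp
  add_mem' := by
    intro a b ha hb s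
    simp only [Pi.add_apply, Finset.sum_add_distrib, ha s, hb s, add_zero]
  neg_mem' := by
    intro a ha s
    simp only [Pi.neg_apply, Finset.sum_neg_distrib, ha s, neg_zero]

lemma mem_closure_R_iff {p t : ℕ} (a : Fin t → Fin p → ℤ) :
    a ∈ AddSubgroup.closure {a : Fin t → Fin p → ℤ | ∀ s, ∑ i, a s i = 0} ↔
      ∀ s, ∑ i, a s i = 0 := by
  have : AddSubgroup.closure {a : Fin t → Fin p → ℤ | ∀ s, ∑ i, a s i = 0} = Rsub p t :=
    AddSubgroup.closure_eq (Rsub p t)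
  rw [this]
  rfl

lemma num_cast_of_int {q : ℚ} (h : ∃ z : ℤ, q = z) : ((q.num : ℤ) : ℚ) = q := by
  obtain ⟨z, rfl⟩ := h; simp

set_option maxHeartbeats 1000000 in
set_option synthInstance.maxHeartbeats 400000 in
lemma forward {p t n : ℕ} (hp : p.Prime)
    (L : Submodule ℤ (Fin n → ℝ))
    (C : AddSubgroup (Fin t → ZMod p))
    (e : L ≃+ AddSubgroup.closure (LA p t ↑C))
    (he : ∀ a b : L, ∑ i, (a : Fin n → ℝ) i * (b : Fin n → ℝ) i =
          ((∑ s, ∑ i, (e a : Fin t → Fin p → ℚ) s i * (e b : Fin t → Fin p → ℚ) s i : ℚ) : ℝ)) :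
    ∃ S : Submodule ℤ (Fin n → ℝ), S ≤ L ∧
      (∀ v ∈ L, ∃ c : ℤ, c ≠ 0 ∧ c • v ∈ S) ∧
      ∃ f : S ≃+ AddSubgroup.closure {a : Fin t → Fin p → ℤ | ∀ s, ∑ i, a s i = 0},
        ∀ a b : S, ∑ i, (a : Fin n → ℝ) i * (b : Fin n → ℝ) i =
          ((∑ s, ∑ i, (f a : Fin t → Fin p → ℤ) s i * (f b : Fin t → Fin p → ℤ) s i : ℤ) : ℝ) := by
  haveI : NeZero p := ⟨hp.ne_zero⟩
  have hp0 : (p : ℚ) ≠ 0 := Nat.cast_ne_zero.mpr hp.ne_zero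
  set E : L → (Fin t → Fin p → ℚ) := fun x => ↑(e x) with hE
  have Eadd : ∀ x y : L, E (x + y) = E x + E y := by
    intro x y; simp [hE, map_add]
  have Esmul : ∀ (c : ℤ) (x : L), E (c • x) = c • E x := by
    intro c x; simp [hE, map_zsmul]
  have Emem : ∀ x : L, E x ∈ AddSubgroup.closure (LA p t ↑C) := fun x => (e x).2
  -- the sublattice S
  set S : Submodule ℤ (Fin n → ℝ) :=
    { carrier := {v | ∃ hv : v ∈ L, ∀ b i, ∃ z : ℤ, E ⟨v, hv⟩ b i = z}
      zero_mem' := by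
        refine ⟨zero_mem L, fun b i => ⟨0, ?_⟩⟩
        have : (⟨0, zero_mem L⟩ : L) = 0 := rfl
        simp [hE, this]
      add_mem' := by
        rintro v w ⟨hv, hv2⟩ ⟨hw, hw2⟩
        refine ⟨add_mem hv hw, fun b i => ?_⟩
        obtain ⟨z, hz⟩ := hv2 b i
        obtain ⟨w', hw'⟩ := hw2 b i
        refine ⟨z + w', ?_⟩
        have : (⟨v + w, add_mem hv hw⟩ : L) = ⟨v, hv⟩ + ⟨w, hw⟩ := rfl
        rw [this, Eadd]
        simp [hz, hw']
      smul_mem' := by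
        rintro c v ⟨hv, hv2⟩
        refine ⟨Submodule.smul_mem L c hv, fun b i => ?_⟩
        obtain ⟨z, hz⟩ := hv2 b i
        refine ⟨c * z, ?_⟩
        have : (⟨c • v, Submodule.smul_mem L c hv⟩ : L) = c • ⟨v, hv⟩ := rfl
        rw [this, Esmul]
        simp [hz] } with hS
  have hSL : S ≤ L := fun v hv => hv.1
  refine ⟨S, hSL, ?_, ?_⟩
  · -- fullness
    intro v hv
    refine ⟨(p : ℤ), by exact_mod_cast hp.ne_zero, ?_⟩
    refine ⟨Submodule.smul_mem L _ hv, fun b i => ?_⟩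
    obtain ⟨-, c, -, h2⟩ := (mem_closure_LA_iff C _).mp (Emem ⟨v, hv⟩)
    obtain ⟨z, hz1, -⟩ := h2 b i
    refine ⟨z, ?_⟩
    have : (⟨(p : ℤ) • v, Submodule.smul_mem L _ hv⟩ : L) = (p : ℤ) • ⟨v, hv⟩ := rfl
    rw [this, Esmul]
    simp only [Pi.smul_apply, zsmul_eq_mul, hz1]
    push_cast
    field_simp
  · -- the isometry f
    have hmemL : ∀ v : S, (v : Fin n → ℝ) ∈ L := fun v => v.2.1
    set q : S → (Fin t → Fin p → ℚ) := fun v => E ⟨v.1, hmemL v⟩ with hq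
    have hqint : ∀ (v : S) b i, ∃ z : ℤ, q v b i = z := fun v => v.2.2
    set F0 : S → (Fin t → Fin p → ℤ) := fun v b i => (q v b i).num with hF0
    have hF0cast : ∀ (v : S) b i, ((F0 v b i : ℤ) : ℚ) = q v b i :=
      fun v b i => num_cast_of_int (hqint v b i)
    have hqsum : ∀ (v : S) b, ∑ i, q v b i = 0 := by
      intro v b
      exact ((mem_closure_LA_iff C _).mp (Emem ⟨v.1, hmemL v⟩)).1 b
    have hF0mem : ∀ v : S,
        F0 v ∈ AddSubgroup.closure {a : Fin t → Fin p → ℤ | ∀ s, ∑ i, a s i = 0} := by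
      intro v
      rw [mem_closure_R_iff]
      intro b
      have : ((∑ i, F0 v b i : ℤ) : ℚ) = 0 := by
        push_cast [hF0cast]
        simpa using hqsum v b
      exact_mod_cast this
    set ι : (Fin t → Fin p → ℤ) → (Fin t → Fin p → ℚ) := fun a b i => ((a b i : ℤ) : ℚ) with hι
    have hιmem : ∀ a ∈ AddSubgroup.closure {a : Fin t → Fin p → ℤ | ∀ s, ∑ i, a s i = 0},
        ι a ∈ AddSubgroup.closure (LA p t ↑C) := by
      intro a ha
      rw [mem_closure_R_iff] at ha
      rw [mem_closure_LA_iff]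
      refine ⟨fun b => ?_, 0, zero_mem C, fun b i => ⟨p * a b i, ?_, ?_⟩⟩
      · show (∑ i, ((a b i : ℤ) : ℚ)) = 0
        exact_mod_cast congrArg (Int.cast : ℤ → ℚ) (ha b)
      · show ((a b i : ℤ) : ℚ) = ((p * a b i : ℤ) : ℚ) / p
        push_cast
        field_simp
      · push_cast
        simp
    set G0 : AddSubgroup.closure {a : Fin t → Fin p → ℤ | ∀ s, ∑ i, a s i = 0} → S :=
      fun a => ⟨(e.symm ⟨ι a.1, hιmem a.1 a.2⟩ : L).1, by
        refine ⟨(e.symm ⟨ι a.1, hιmem a.1 a.2⟩ : L).2, fun b i => ⟨a.1 b i, ?_⟩⟩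
        have h1 : (⟨(e.symm ⟨ι a.1, hιmem a.1 a.2⟩ : L).1,
            (e.symm ⟨ι a.1, hιmem a.1 a.2⟩ : L).2⟩ : L) = e.symm ⟨ι a.1, hιmem a.1 a.2⟩ := rfl
        rw [h1]
        show (↑(e (e.symm ⟨ι a.1, hιmem a.1 a.2⟩)) : Fin t → Fin p → ℚ) b i = _
        rw [e.apply_symm_apply]⟩ with hG0
    have hqG0 : ∀ a, q (G0 a) = ι a.1 := by
      intro a
      have h1 : (⟨(G0 a).1, hmemL (G0 a)⟩ : L) = e.symm ⟨ι a.1, hιmem a.1 a.2⟩ := rfl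
      show E _ = _
      rw [h1]
      show (↑(e (e.symm ⟨ι a.1, hιmem a.1 a.2⟩)) : Fin t → Fin p → ℚ) = _
      rw [e.apply_symm_apply]
    have hqadd : ∀ v w : S, q (v + w) = q v + q w := by
      intro v w
      have h1 : (⟨(v + w).1, hmemL (v + w)⟩ : L) = ⟨v.1, hmemL v⟩ + ⟨w.1, hmemL w⟩ := rfl
      show E _ = E _ + E _
      rw [h1, Eadd]
    refine ⟨{ toFun := fun v => ⟨F0 v, hF0mem v⟩
              invFun := G0
              left_inv := ?_
              right_inv := ?_
              map_add' := ?_ }, ?_⟩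
    · intro v
      have hιF : ι (F0 v) = q v := by
        funext b i; exact hF0cast v b i
      apply Subtype.ext
      show (e.symm ⟨ι (F0 v), _⟩ : L).1 = v.1
      have h2 : (⟨ι (F0 v), hιmem _ (hF0mem v)⟩ :
          AddSubgroup.closure (LA p t ↑C)) = e ⟨v.1, hmemL v⟩ := by
        apply Subtype.ext
        show ι (F0 v) = E ⟨v.1, hmemL v⟩
        exact hιF
      rw [h2, e.symm_apply_apply]
    · intro a
      apply Subtype.ext
      funext b i
      show (q (G0 a) b i).num = a.1 b i
      rw [hqG0 a]
      simp [hι]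
    · intro v w
      apply Subtype.ext
      funext b i
      show (q (v + w) b i).num = (q v b i).num + (q w b i).num
      have : ((q (v + w) b i).num : ℚ) = ((q v b i).num + (q w b i).num : ℤ) := by
        push_cast [hF0cast]
        rw [hqadd]
        simp [hF0cast v b i, hF0cast w b i]
        have h1 : ((q v b i).num : ℚ) = q v b i := hF0cast v b i
        have h2 : ((q w b i).num : ℚ) = q w b i := hF0cast w b i
        rw [h1, h2]
        exact num_cast_of_int ⟨(q v b i).num + (q w b i).num, by push_cast; rw [h1, h2]⟩
      exact_mod_cast this
    · intro a b
      have h1 := he ⟨a.1, hmemL a⟩ ⟨b.1, hmemL b⟩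
      have h2 : (∑ s, ∑ i, (E ⟨a.1, hmemL a⟩) s i * (E ⟨b.1, hmemL b⟩) s i : ℚ) =
          ((∑ s, ∑ i, F0 a s i * F0 b s i : ℤ) : ℚ) := by
        push_cast
        refine Finset.sum_congr rfl fun s _ => Finset.sum_congr rfl fun i _ => ?_
        rw [hF0cast a s i, hF0cast b s i]
      show ∑ i, (a : Fin n → ℝ) i * (b : Fin n → ℝ) i =
          ((∑ s, ∑ i, F0 a s i * F0 b s i : ℤ) : ℝ)
      rw [h1]
      have h3 : (∑ s, ∑ i, (e ⟨a.1, hmemL a⟩ : Fin t → Fin p → ℚ) s i *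
          (e ⟨b.1, hmemL b⟩ : Fin t → Fin p → ℚ) s i : ℚ) =
          ((∑ s, ∑ i, F0 a s i * F0 b s i : ℤ) : ℚ) := h2
      rw [h3]
      norm_cast

lemma key_div {p t : ℕ} [NeZero p] (Z : Fin t → Fin p → ℤ) (m : ℤ)
    (hsum : ∀ b, ∑ i, Z b i = 0)
    (hmod : ∀ b i, (p : ℤ) ∣ Z b i - Z b 0)
    (htot : ∑ b, ∑ i, Z b i * Z b i = 2 * m * p ^ 2) :
    (p : ℤ) ∣ ∑ b, Z b 0 * Z b 0 := by
  have hp0 : (p : ℤ) ≠ 0 := by exact_mod_cast (NeZero.ne p)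
  choose k hk using hmod
  have hks : ∀ b, Z b 0 + ∑ i, k b i = 0 := by
    intro b
    have h1 : ∑ i, Z b i = (p : ℤ) * Z b 0 + (p:ℤ) * ∑ i, k b i := by
      calc ∑ i, Z b i = ∑ i, (Z b 0 + (p:ℤ) * k b i) :=
            Finset.sum_congr rfl fun i _ => by linarith [hk b i]
        _ = _ := by
            rw [Finset.sum_add_distrib, Finset.sum_const, Finset.card_univ, Fintype.card_fin,
              ← Finset.mul_sum]
            push_cast
            ring
    have h2 := hsum b
    have h3 : (p:ℤ) * (Z b 0 + ∑ i, k b i) = 0 := by linarith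
    exact (mul_eq_zero.mp h3).resolve_left hp0
  have hrow : ∀ b, ∑ i, Z b i * Z b i = -(p:ℤ) * (Z b 0 * Z b 0) + p^2 * ∑ i, k b i * k b i := by
    intro b
    have h2 : ∀ i, Z b i = Z b 0 + p * k b i := by
      intro i; have := hk b i; linarith
    calc ∑ i, Z b i * Z b i = ∑ i, (Z b 0 * Z b 0 + 2 * (p:ℤ) * Z b 0 * k b i + p^2 * (k b i * k b i)) := by
          refine Finset.sum_congr rfl fun i _ => ?_
          rw [h2 i]; ring
      _ = (p:ℤ) * (Z b 0 * Z b 0) + 2 * (p:ℤ) * Z b 0 * (∑ i, k b i) + p^2 * ∑ i, k b i * k b i := by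
          rw [Finset.sum_add_distrib, Finset.sum_add_distrib, Finset.sum_const, Finset.card_univ,
            Fintype.card_fin, ← Finset.mul_sum, ← Finset.mul_sum]
          push_cast; ring
      _ = -(p:ℤ) * (Z b 0 * Z b 0) + p^2 * ∑ i, k b i * k b i := by
          have := hks b
          have h3 : (∑ i, k b i) = -Z b 0 := by linarith
          rw [h3]; ring
  have htot2 : -(p:ℤ) * ∑ b, Z b 0 * Z b 0 + p^2 * ∑ b, ∑ i, k b i * k b i = 2 * m * p^2 := by
    rw [← htot, Finset.mul_sum, Finset.mul_sum, ← Finset.sum_add_distrib]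
    exact Finset.sum_congr rfl fun b _ => (hrow b).symm
  refine ⟨(∑ b, ∑ i, k b i * k b i) - 2 * m, mul_left_cancel₀ hp0 ?_⟩
  linear_combination -htot2

set_option maxHeartbeats 2000000 in
set_option synthInstance.maxHeartbeats 400000 in
lemma backward {p t n : ℕ} (hp : p.Prime)
    (L : Submodule ℤ (Fin n → ℝ))
    (heven : ∀ v ∈ L, ∃ m : ℤ, ∑ i, v i * v i = 2 * m)
    (S : Submodule ℤ (Fin n → ℝ)) (hSL : S ≤ L)
    (hfull : ∀ v ∈ L, ∃ c : ℤ, c ≠ 0 ∧ c • v ∈ S)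
    (f : S ≃+ AddSubgroup.closure {a : Fin t → Fin p → ℤ | ∀ s, ∑ i, a s i = 0})
    (hf : ∀ a b : S, ∑ i, (a : Fin n → ℝ) i * (b : Fin n → ℝ) i =
          ((∑ s, ∑ i, (f a : Fin t → Fin p → ℤ) s i * (f b : Fin t → Fin p → ℤ) s i : ℤ) : ℝ)) :
    ∃ C : AddSubgroup (Fin t → ZMod p), (∀ c ∈ C, ∑ b, c b * c b = 0) ∧
      ∃ e : L ≃+ AddSubgroup.closure (LA p t ↑C),
        ∀ a b : L, ∑ i, (a : Fin n → ℝ) i * (b : Fin n → ℝ) i =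
          ((∑ s, ∑ i, (e a : Fin t → Fin p → ℚ) s i * (e b : Fin t → Fin p → ℚ) s i : ℚ) : ℝ) := by
  classical
  haveI : NeZero p := ⟨hp.ne_zero⟩
  have hpQ : (p : ℚ) ≠ 0 := Nat.cast_ne_zero.mpr hp.ne_zero
  have hpZ : (p : ℤ) ≠ 0 := by exact_mod_cast hp.ne_zero
  -- integrality of the form on L
  have hBint : ∀ v ∈ L, ∀ w ∈ L, ∃ z : ℤ, ∑ i, v i * w i = (z : ℝ) := by
    intro v hv w hw
    obtain ⟨m1, h1⟩ := heven v hv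
    obtain ⟨m2, h2⟩ := heven w hw
    obtain ⟨m3, h3⟩ := heven (v + w) (add_mem hv hw)
    refine ⟨m3 - m1 - m2, ?_⟩
    have hexp : ∑ i, (v + w) i * (v + w) i
        = ∑ i, v i * v i + ∑ i, w i * w i + 2 * ∑ i, v i * w i := by
      rw [Finset.mul_sum, ← Finset.sum_add_distrib, ← Finset.sum_add_distrib]
      refine Finset.sum_congr rfl fun i _ => ?_
      simp only [Pi.add_apply]
      ring
    rw [hexp, h1, h2] at h3
    push_cast
    linarith
  -- basic data
  set cx : L → ℤ := fun x => (hfull x.1 x.2).choose with hcxdef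
  have hcnz : ∀ x : L, cx x ≠ 0 := fun x => (hfull x.1 x.2).choose_spec.1
  have hcS : ∀ x : L, cx x • (x : Fin n → ℝ) ∈ S := fun x => (hfull x.1 x.2).choose_spec.2
  set F : S → (Fin t → Fin p → ℤ) := fun s => ↑(f s) with hFdef
  have hFadd : ∀ s s' : S, F (s + s') = F s + F s' := by intro s s'; simp [hFdef, map_add]
  have hFsmul : ∀ (c : ℤ) (s : S), F (c • s) = c • F s := by
    intro c s; simp [hFdef, map_zsmul]
  have hFsum : ∀ (s : S) b, ∑ i, F s b i = 0 := fun s => (mem_closure_R_iff _).mp (f s).2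
  set g : L → Fin t → Fin p → ℚ :=
    fun x b i => (F ⟨cx x • x.1, hcS x⟩ b i : ℚ) / (cx x) with hgdef
  -- well-definedness
  have cross : ∀ (x : L) (c c' : ℤ) (h : c • (x : Fin n → ℝ) ∈ S)
      (h' : c' • (x : Fin n → ℝ) ∈ S),
      c' • F ⟨c • x.1, h⟩ = c • F ⟨c' • x.1, h'⟩ := by
    intro x c c' h h'
    have e1 : c' • (⟨c • x.1, h⟩ : S) = c • (⟨c' • x.1, h'⟩ : S) := by
      apply Subtype.ext
      show c' • (c • (x : Fin n → ℝ)) = c • (c' • (x : Fin n → ℝ))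
      rw [smul_comm]
    rw [← hFsmul, ← hFsmul, e1]
  have hgspec : ∀ (x : L) (c : ℤ) (_ : c ≠ 0) (h : c • (x : Fin n → ℝ) ∈ S), ∀ b i,
      g x b i = (F ⟨c • x.1, h⟩ b i : ℚ) / c := by
    intro x c hc h b i
    have := cross x (cx x) c (hcS x) h
    have h2 : c * F ⟨cx x • x.1, hcS x⟩ b i = cx x * F ⟨c • x.1, h⟩ b i := by
      have := congrFun (congrFun this b) i
      simpa [smul_comm] using this
    show (F ⟨cx x • x.1, hcS x⟩ b i : ℚ) / (cx x) = _
    have hcQ : (c : ℚ) ≠ 0 := Int.cast_ne_zero.mpr hc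
    have hcxQ : ((cx x : ℤ) : ℚ) ≠ 0 := Int.cast_ne_zero.mpr (hcnz x)
    rw [div_eq_div_iff hcxQ hcQ]
    have h3 : (c : ℚ) * (F ⟨cx x • x.1, hcS x⟩ b i : ℚ)
        = (cx x : ℚ) * (F ⟨c • x.1, h⟩ b i : ℚ) := by exact_mod_cast h2
    linarith
  have hgS : ∀ (s : S) b i, g ⟨s.1, hSL s.2⟩ b i = (F s b i : ℚ) := by
    intro s b i
    have h : (1 : ℤ) • ((⟨s.1, hSL s.2⟩ : L) : Fin n → ℝ) ∈ S := by
      rw [one_smul]; exact s.2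
    rw [hgspec ⟨s.1, hSL s.2⟩ 1 one_ne_zero h b i]
    have e1 : (⟨(1 : ℤ) • s.1, h⟩ : S) = s := Subtype.ext (one_smul _ _)
    rw [e1]
    simp
  have hgadd : ∀ x y : L, ∀ b i, g (x + y) b i = g x b i + g y b i := by
    intro x y b i
    have hx := hcS x
    have hy := hcS y
    have hne : cx x * cx y ≠ 0 := mul_ne_zero (hcnz x) (hcnz y)
    set sx : S := ⟨cx x • x.1, hx⟩ with hsx
    set sy : S := ⟨cx y • y.1, hy⟩ with hsy
    have hco : (cx x * cx y) • ((x + y : L) : Fin n → ℝ)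
        = (cx y • sx + cx x • sy : S).1 := by
      show (cx x * cx y) • ((x : Fin n → ℝ) + (y : Fin n → ℝ)) = _
      show _ = cx y • (cx x • (x : Fin n → ℝ)) + cx x • (cx y • (y : Fin n → ℝ))
      rw [smul_add, smul_smul, smul_smul, mul_comm (cx y) (cx x)]
    have hmem : (cx x * cx y) • ((x + y : L) : Fin n → ℝ) ∈ S := by
      rw [hco]; exact (cx y • sx + cx x • sy : S).2
    rw [hgspec (x + y) _ hne hmem b i, hgspec x _ (hcnz x) hx b i, hgspec y _ (hcnz y) hy b i]
    have e1 : (⟨(cx x * cx y) • ((x + y : L) : Fin n → ℝ), hmem⟩ : S)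
        = cx y • sx + cx x • sy := Subtype.ext hco
    rw [e1, hFadd, hFsmul, hFsmul]
    have hxQ : ((cx x : ℤ) : ℚ) ≠ 0 := Int.cast_ne_zero.mpr (hcnz x)
    have hyQ : ((cx y : ℤ) : ℚ) ≠ 0 := Int.cast_ne_zero.mpr (hcnz y)
    show (((cx y • F sx + cx x • F sy : Fin t → Fin p → ℤ) b i : ℤ) : ℚ) / ((cx x * cx y : ℤ) : ℚ)
        = (F sx b i : ℚ) / (cx x : ℚ) + (F sy b i : ℚ) / (cx y : ℚ)
    have : ((cx y • F sx + cx x • F sy : Fin t → Fin p → ℤ) b i : ℤ)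
        = cx y * F sx b i + cx x * F sy b i := by
      simp [Pi.add_apply, Pi.smul_apply, smul_eq_mul]
    rw [this]
    push_cast
    field_simp
  have hgsum : ∀ (x : L) b, ∑ i, g x b i = 0 := by
    intro x b
    show (∑ i, (F ⟨cx x • x.1, hcS x⟩ b i : ℚ) / (cx x)) = 0
    rw [← Finset.sum_div]
    have : (∑ i, (F ⟨cx x • x.1, hcS x⟩ b i : ℚ)) = 0 := by
      exact_mod_cast congrArg (Int.cast : ℤ → ℚ) (hFsum ⟨cx x • x.1, hcS x⟩ b)
    rw [this, zero_div]
  have hgiso : ∀ x y : L, ∑ i, (x : Fin n → ℝ) i * (y : Fin n → ℝ) i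
      = ((∑ b, ∑ i, g x b i * g y b i : ℚ) : ℝ) := by
    intro x y
    set sx : S := ⟨cx x • x.1, hcS x⟩ with hsx
    set sy : S := ⟨cx y • y.1, hcS y⟩ with hsy
    have h1 := hf sx sy
    have h2 : ∑ i, (sx : Fin n → ℝ) i * (sy : Fin n → ℝ) i
        = ((cx x * cx y : ℤ) : ℝ) * ∑ i, (x : Fin n → ℝ) i * (y : Fin n → ℝ) i := by
      rw [Finset.mul_sum]
      refine Finset.sum_congr rfl fun i _ => ?_
      show (cx x • (x : Fin n → ℝ)) i * (cx y • (y : Fin n → ℝ)) i = _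
      simp only [Pi.smul_apply, zsmul_eq_mul]
      push_cast
      ring
    have h3 : (∑ b, ∑ i, g x b i * g y b i : ℚ)
        = ((∑ b, ∑ i, F sx b i * F sy b i : ℤ) : ℚ) / ((cx x * cx y : ℤ) : ℚ) := by
      push_cast
      rw [Finset.sum_div]
      refine Finset.sum_congr rfl fun b _ => ?_
      rw [Finset.sum_div]
      refine Finset.sum_congr rfl fun i _ => ?_
      show (F sx b i : ℚ) / (cx x : ℚ) * ((F sy b i : ℚ) / (cx y : ℚ)) = _
      have hxQ : ((cx x : ℤ) : ℚ) ≠ 0 := Int.cast_ne_zero.mpr (hcnz x)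
      have hyQ : ((cx y : ℤ) : ℚ) ≠ 0 := Int.cast_ne_zero.mpr (hcnz y)
      field_simp
    have hcdR : ((cx x * cx y : ℤ) : ℝ) ≠ 0 :=
      Int.cast_ne_zero.mpr (mul_ne_zero (hcnz x) (hcnz y))
    rw [h3]
    push_cast
    rw [eq_div_iff (by exact_mod_cast hcdR)]
    rw [h2] at h1
    push_cast at h1
    linarith
  -- integrality of pairings with the sublattice image
  have hgint : ∀ (x : L) (a : Fin t → Fin p → ℤ),
      a ∈ AddSubgroup.closure {a : Fin t → Fin p → ℤ | ∀ s, ∑ i, a s i = 0} →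
      ∃ z : ℤ, (∑ b, ∑ i, g x b i * (a b i : ℚ)) = (z : ℚ) := by
    intro x a ha
    set s : S := f.symm ⟨a, ha⟩ with hs
    have hFs : F s = a := by
      show (↑(f (f.symm ⟨a, ha⟩)) : Fin t → Fin p → ℤ) = a
      rw [f.apply_symm_apply]
    obtain ⟨z, hz⟩ := hBint x.1 x.2 s.1 (hSL s.2)
    refine ⟨z, ?_⟩
    have h1 := hgiso x ⟨s.1, hSL s.2⟩
    have h2 : (∑ b, ∑ i, g x b i * g ⟨s.1, hSL s.2⟩ b i : ℚ)
        = ∑ b, ∑ i, g x b i * (a b i : ℚ) := by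
      refine Finset.sum_congr rfl fun b _ => Finset.sum_congr rfl fun i _ => ?_
      rw [hgS s b i, hFs]
    rw [h2] at h1
    have h3 : ((∑ b, ∑ i, g x b i * (a b i : ℚ) : ℚ) : ℝ) = (z : ℝ) := by
      rw [← h1]
      exact hz
    exact_mod_cast h3
  -- entry differences are integers
  have hdiff : ∀ (x : L) b i j, ∃ z : ℤ, g x b i - g x b j = (z : ℚ) := by
    intro x b i j
    set D : Fin t → Fin p → ℤ := fun b' i' =>
      if b' = b then (if i' = i then 1 else 0) - (if i' = j then 1 else 0) else 0 with hD
    have hDmem : D ∈ AddSubgroup.closure {a : Fin t → Fin p → ℤ | ∀ s, ∑ i, a s i = 0} := by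
      rw [mem_closure_R_iff]
      intro s
      by_cases hsb : s = b <;> simp [hD, hsb, Finset.sum_sub_distrib]
    obtain ⟨z, hz⟩ := hgint x D hDmem
    refine ⟨z, ?_⟩
    rw [← hz]
    have h1 : ∀ b', (∑ i', g x b' i' * (D b' i' : ℚ))
        = if b' = b then g x b i - g x b j else 0 := by
      intro b'
      by_cases hsb : b' = b
      · subst hsb
        simp only [hD, if_pos rfl]
        push_cast
        rw [show (∑ i', g x b' i' * ((if i' = i then (1:ℚ) else 0) - (if i' = j then 1 else 0)))
            = ∑ i', (g x b' i' * (if i' = i then (1:ℚ) else 0)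
              - g x b' i' * (if i' = j then 1 else 0)) from
          Finset.sum_congr rfl fun i' _ => by ring]
        rw [Finset.sum_sub_distrib]
        simp only [mul_ite, mul_one, mul_zero, Finset.sum_ite_eq', Finset.mem_univ, if_pos]
      · simp [hD, hsb]
    rw [Finset.sum_congr rfl fun b' _ => h1 b']
    simp
  -- p times entries are integers
  have hpint : ∀ (x : L) b i, ∃ z : ℤ, (p : ℚ) * g x b i = (z : ℚ) := by
    intro x b i
    obtain ⟨k, hk⟩ : ∃ k : Fin p → ℤ, ∀ i', g x b i' - g x b 0 = (k i' : ℚ) := by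
      choose k hk using fun i' => hdiff x b i' 0
      exact ⟨k, hk⟩
    have h0 : (p : ℚ) * g x b 0 = -(∑ i', (k i' : ℚ)) := by
      have hs := hgsum x b
      have h1 : ∑ i', g x b i' = ∑ i', (g x b 0 + (k i' : ℚ)) :=
        Finset.sum_congr rfl fun i' _ => by linarith [hk i']
      rw [h1, Finset.sum_add_distrib, Finset.sum_const, Finset.card_univ,
        Fintype.card_fin, nsmul_eq_mul] at hs
      linarith
    refine ⟨-(∑ i', k i') + p * k i, ?_⟩
    have h2 : g x b i = g x b 0 + (k i : ℚ) := by linarith [hk i]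
    rw [h2]
    push_cast
    linarith [h0]
  -- integer matrix of p*g
  set Z : L → Fin t → Fin p → ℤ := fun x b i => ((p : ℚ) * g x b i).num with hZdef
  have hZ : ∀ (x : L) b i, ((Z x b i : ℤ) : ℚ) = (p : ℚ) * g x b i := by
    intro x b i
    exact num_cast_of_int ⟨(hpint x b i).choose, (hpint x b i).choose_spec⟩
  have hZadd : ∀ x y : L, ∀ b i, Z (x + y) b i = Z x b i + Z y b i := by
    intro x y b i
    have : ((Z (x + y) b i : ℤ) : ℚ) = ((Z x b i + Z y b i : ℤ) : ℚ) := by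
      rw [hZ]
      push_cast
      rw [hgadd x y b i, hZ, hZ]
      push_cast
      ring
    exact_mod_cast this
  have hZsum : ∀ (x : L) b, ∑ i, Z x b i = 0 := by
    intro x b
    have : ((∑ i, Z x b i : ℤ) : ℚ) = 0 := by
      push_cast
      rw [Finset.sum_congr rfl fun i _ => hZ x b i, ← Finset.mul_sum, hgsum x b, mul_zero]
    exact_mod_cast this
  have hZdvd : ∀ (x : L) b i j, (p : ℤ) ∣ Z x b i - Z x b j := by
    intro x b i j
    obtain ⟨z, hz⟩ := hdiff x b i j
    refine ⟨z, ?_⟩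
    have : ((Z x b i - Z x b j : ℤ) : ℚ) = (((p : ℤ) * z : ℤ) : ℚ) := by
      push_cast
      rw [hZ, hZ]
      have := hz
      nlinarith [hz]
    exact_mod_cast this
  have hZmod : ∀ (x : L) b i j, ((Z x b i : ℤ) : ZMod p) = ((Z x b j : ℤ) : ZMod p) := by
    intro x b i j
    have h1 : ((Z x b i - Z x b j : ℤ) : ZMod p) = 0 := by
      rw [ZMod.intCast_zmod_eq_zero_iff_dvd]
      exact_mod_cast hZdvd x b i j
    push_cast at h1
    linear_combination h1
  -- the code
  set ch : L →+ (Fin t → ZMod p) := AddMonoidHom.mk'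
    (fun x b => ((-(Z x b 0) : ℤ) : ZMod p))
    (by
      intro x y
      funext b
      show ((-(Z (x + y) b 0) : ℤ) : ZMod p) = ((-(Z x b 0) : ℤ) : ZMod p) + ((-(Z y b 0) : ℤ) : ZMod p)
      rw [hZadd x y b 0]
      push_cast
      ring) with hch
  set C : AddSubgroup (Fin t → ZMod p) := ch.range with hC
  have horth : ∀ c ∈ C, ∑ b, c b * c b = 0 := by
    intro c hc
    obtain ⟨x, rfl⟩ := hc
    obtain ⟨m, hm⟩ := heven x.1 x.2
    -- total sum identity
    have hQ : (∑ b, ∑ i, g x b i * g x b i : ℚ) = ((2 * m : ℤ) : ℚ) := by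
      have h1 := hgiso x x
      rw [hm] at h1
      have h2 : ((∑ b, ∑ i, g x b i * g x b i : ℚ) : ℝ) = (((2 * m : ℤ) : ℚ) : ℝ) := by
        rw [← h1]
        push_cast
        ring
      exact_mod_cast h2
    have htot : ∑ b, ∑ i, Z x b i * Z x b i = 2 * m * (p : ℤ) ^ 2 := by
      have hcast : ((∑ b, ∑ i, Z x b i * Z x b i : ℤ) : ℚ)
          = (p : ℚ) ^ 2 * ∑ b, ∑ i, g x b i * g x b i := by
        push_cast
        rw [Finset.mul_sum]
        refine Finset.sum_congr rfl fun b _ => ?_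
        rw [Finset.mul_sum]
        refine Finset.sum_congr rfl fun i _ => ?_
        rw [hZ x b i]
        ring
      have : ((∑ b, ∑ i, Z x b i * Z x b i : ℤ) : ℚ) = ((2 * m * (p : ℤ) ^ 2 : ℤ) : ℚ) := by
        rw [hcast, hQ]
        push_cast
        ring
      exact_mod_cast this
    have hdvd := key_div (Z x) m (hZsum x) (fun b i => hZdvd x b i 0) htot
    show ∑ b, ((-(Z x b 0) : ℤ) : ZMod p) * ((-(Z x b 0) : ℤ) : ZMod p) = 0
    have : (∑ b, ((-(Z x b 0) : ℤ) : ZMod p) * ((-(Z x b 0) : ℤ) : ZMod p))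
        = ((∑ b, Z x b 0 * Z x b 0 : ℤ) : ZMod p) := by
      push_cast
      refine Finset.sum_congr rfl fun b _ => by ring
    rw [this, ZMod.intCast_zmod_eq_zero_iff_dvd]
    exact_mod_cast hdvd
  -- membership of g x in the closure of LA
  have hmemLA : ∀ x : L, g x ∈ AddSubgroup.closure (LA p t ↑C) := by
    intro x
    rw [mem_closure_LA_iff]
    refine ⟨hgsum x, ch x, ⟨x, rfl⟩, fun b i => ⟨Z x b i, ?_, ?_⟩⟩
    · rw [eq_div_iff hpQ, hZ x b i]
      ring
    · show ((Z x b i : ℤ) : ZMod p) = -(((-(Z x b 0) : ℤ) : ZMod p))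
      push_cast
      rw [neg_neg]
      have := hZmod x b i 0
      push_cast at this
      exact this
  set e0 : L →+ (AddSubgroup.closure (LA p t ↑C)) := AddMonoidHom.mk'
    (fun x => ⟨g x, hmemLA x⟩)
    (by
      intro x y
      apply Subtype.ext
      show g (x + y) = g x + g y
      funext b i
      exact hgadd x y b i) with he0
  have hinj : Function.Injective e0 := by
    rw [injective_iff_map_eq_zero]
    intro x hx
    have hg0 : g x = 0 := congrArg Subtype.val hx
    have hF0 : F ⟨cx x • x.1, hcS x⟩ = 0 := by
      funext b i
      have h1 : (F ⟨cx x • x.1, hcS x⟩ b i : ℚ) / (cx x) = 0 := by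
        show g x b i = 0
        rw [hg0]
        rfl
      have hcxQ : ((cx x : ℤ) : ℚ) ≠ 0 := Int.cast_ne_zero.mpr (hcnz x)
      have := (div_eq_zero_iff.mp h1).resolve_right hcxQ
      exact_mod_cast this
    have hs0 : (⟨cx x • x.1, hcS x⟩ : S) = 0 := by
      apply f.injective
      apply Subtype.ext
      show F ⟨cx x • x.1, hcS x⟩ = _
      rw [hF0, map_zero]
      rfl
    have hv0 : cx x • (x : Fin n → ℝ) = 0 := congrArg Subtype.val hs0
    have hx0 : (x : Fin n → ℝ) = 0 := by
      funext j
      have := congrFun hv0 j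
      simp only [Pi.smul_apply, zsmul_eq_mul, Pi.zero_apply] at this
      have hcxR : ((cx x : ℤ) : ℝ) ≠ 0 := Int.cast_ne_zero.mpr (hcnz x)
      exact (mul_eq_zero.mp this).resolve_left hcxR
    exact Subtype.ext hx0
  have hsurj : Function.Surjective e0 := by
    rintro ⟨α, hα⟩
    obtain ⟨hsum, c, hcC, h2⟩ := (mem_closure_LA_iff C α).mp hα
    obtain ⟨w, rfl⟩ := hcC
    choose zf hz1 hz2 using h2
    have hzZ : ∀ b i, ((zf b i : ℤ) : ZMod p) = ((Z w b i : ℤ) : ZMod p) := by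
      intro b i
      rw [hz2 b i]
      show -(((-(Z w b 0) : ℤ) : ZMod p)) = _
      push_cast
      rw [neg_neg]
      have := hZmod w b 0 i
      push_cast at this
      exact this
    have hdvd : ∀ b i, (p : ℤ) ∣ zf b i - Z w b i := by
      intro b i
      have h1 : ((zf b i - Z w b i : ℤ) : ZMod p) = 0 := by
        push_cast
        have := hzZ b i
        push_cast at this
        linear_combination this
      exact_mod_cast (ZMod.intCast_zmod_eq_zero_iff_dvd _ _).mp h1
    choose k hk using hdvd
    have hzfsum : ∀ b, ∑ i, zf b i = 0 := by
      intro b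
      have h1 : ((∑ i, zf b i : ℤ) : ℚ) = 0 := by
        push_cast
        have h2 : ∀ i, (zf b i : ℚ) = (p : ℚ) * α b i := by
          intro i
          rw [hz1 b i]
          field_simp
        rw [Finset.sum_congr rfl fun i _ => h2 i, ← Finset.mul_sum, hsum b, mul_zero]
      exact_mod_cast h1
    have hkmem : k ∈ AddSubgroup.closure {a : Fin t → Fin p → ℤ | ∀ s, ∑ i, a s i = 0} := by
      rw [mem_closure_R_iff]
      intro b
      have h1 : (p : ℤ) * ∑ i, k b i = (p : ℤ) * 0 := by
        rw [Finset.mul_sum, mul_zero]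
        have h2 : ∀ i, (p : ℤ) * k b i = zf b i - Z w b i := fun i => (hk b i).symm
        rw [Finset.sum_congr rfl fun i _ => h2 i, Finset.sum_sub_distrib, hzfsum b, hZsum w b,
          sub_zero]
      exact mul_left_cancel₀ hpZ h1
    set s : S := f.symm ⟨k, hkmem⟩ with hsdef
    have hFs : F s = k := by
      show (↑(f (f.symm ⟨k, hkmem⟩)) : Fin t → Fin p → ℤ) = k
      rw [f.apply_symm_apply]
    refine ⟨w + ⟨s.1, hSL s.2⟩, ?_⟩
    apply Subtype.ext
    show g (w + ⟨s.1, hSL s.2⟩) = α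
    funext b i
    rw [hgadd w ⟨s.1, hSL s.2⟩ b i, hgS s b i, hFs, hz1 b i]
    have h1 := hZ w b i
    have h2 := hk b i
    have h3 : (zf b i : ℚ) = (Z w b i : ℚ) + (p : ℚ) * (k b i : ℚ) := by
      exact_mod_cast congrArg (Int.cast : ℤ → ℚ) (by linarith [h2] : zf b i = Z w b i + p * k b i)
    rw [h3]
    field_simp
    linarith [h1]
  refine ⟨C, horth, AddEquiv.ofBijective e0 ⟨hinj, hsurj⟩, fun a b => ?_⟩
  exact hgiso a b

/-- An even lattice `L` is isometric to `L_A(C)` for some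
self-orthogonal code `C` of length `t` over `ℤ/p` (`p` an odd prime) if and only
if `L` contains a full sublattice isometric to the orthogonal sum of `t` copies
of the root lattice of type `A_{p-1}` (the block-sum-zero vectors of `ℤ^{t×p}`).
"Isometric" means: an additive (i.e. `ℤ`-linear) equivalence preserving the
bilinear forms; "full" means every vector of `L` has a nonzero integral multiple
in the sublattice. -/
theorem stmt_13 (p t n : ℕ) (hp : p.Prime) (hodd : Odd p)
    (L : Submodule ℤ (Fin n → ℝ))
    (heven : ∀ v ∈ L, ∃ m : ℤ, ∑ i, v i * v i = 2 * m) :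
    (∃ C : AddSubgroup (Fin t → ZMod p), (∀ c ∈ C, ∑ b, c b * c b = 0) ∧
      ∃ e : L ≃+ AddSubgroup.closure (LA p t ↑C),
        ∀ a b : L, ∑ i, (a : Fin n → ℝ) i * (b : Fin n → ℝ) i =
          ((∑ s, ∑ i, (e a : Fin t → Fin p → ℚ) s i * (e b : Fin t → Fin p → ℚ) s i : ℚ) : ℝ)) ↔
    (∃ S : Submodule ℤ (Fin n → ℝ), S ≤ L ∧
      (∀ v ∈ L, ∃ c : ℤ, c ≠ 0 ∧ c • v ∈ S) ∧
      ∃ f : S ≃+ AddSubgroup.closure {a : Fin t → Fin p → ℤ | ∀ s, ∑ i, a s i = 0},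
        ∀ a b : S, ∑ i, (a : Fin n → ℝ) i * (b : Fin n → ℝ) i =
          ((∑ s, ∑ i, (f a : Fin t → Fin p → ℤ) s i * (f b : Fin t → Fin p → ℤ) s i : ℤ) : ℝ)) := by
  constructor
  · rintro ⟨C, _, e, he⟩
    exact forward hp L C e he
  · rintro ⟨S, hSL, hfull, f, hf⟩
    exact backward hp L heven S hSL hfull f hf
end

section
/- Let $L$ be a rootless positive-definite even lattice, $p$ an odd prime, $g$ a fixed-point free isometry of $L$ of order $p$, and $\lambda \in L^*$ with $g\lambda - \lambda \in L$ and $\lambda \notin L$. Let $\gamma \in (\lambda+L)$ have norm 2. Then the orbit $\{g^i\gamma \mid 0 \le i \le p-1\}$ consists of $p$ distinct norm-2 vectors summing to zero, with $(\gamma|g^i\gamma) \in \{0,-1\}$ for $1 \le i \le p-1$, and the $\mathbb{Z}$-span of this orbit is isometric to the root lattice of type $A_{p-1}$. -/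
/-- The root lattice of type `A_{p-1}`: integer vectors of length `p` with
coordinate sum zero. -/
def Ap (p : ℕ) : Submodule ℤ (Fin p → ℤ) where
  carrier := {a | ∑ i, a i = 0}
  add_mem' := by
    intro a b ha hb
    simp only [Set.mem_setOf_eq, Pi.add_apply] at *
    simp [Finset.sum_add_distrib, ha, hb]
  zero_mem' := by simp
  smul_mem' := by
    intro c a ha
    simp only [Set.mem_setOf_eq, Pi.smul_apply, smul_eq_mul] at *
    simp [← Finset.mul_sum, ha]

section Aux
variable {n p : ℕ}

/-- real dot product -/
def dR (x y : Fin n → ℝ) : ℝ := ∑ s, x s * y s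
/-- integer dot product -/
def dZ (x y : Fin p → ℤ) : ℤ := ∑ s, x s * y s

lemma dR_symm (x y : Fin n → ℝ) : dR x y = dR y x :=
  Finset.sum_congr rfl fun s _ => mul_comm _ _

lemma dR_self_nonneg (x : Fin n → ℝ) : 0 ≤ dR x x :=
  Finset.sum_nonneg fun s _ => mul_self_nonneg _

lemma dR_self_eq_zero {x : Fin n → ℝ} (h : dR x x = 0) : x = 0 := by
  funext s
  have := (Finset.sum_eq_zero_iff_of_nonneg (fun s _ => mul_self_nonneg (x s))).mp h s
    (Finset.mem_univ s)
  exact mul_self_eq_zero.mp this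

lemma dZ_self_eq_zero {x : Fin p → ℤ} (h : dZ x x = 0) : x = 0 := by
  funext s
  have := (Finset.sum_eq_zero_iff_of_nonneg (fun s _ => mul_self_nonneg (x s))).mp h s
    (Finset.mem_univ s)
  exact mul_self_eq_zero.mp this

lemma dR_sub_self (u v : Fin n → ℝ) :
    dR (u - v) (u - v) = dR u u - 2 * dR u v + dR v v := by
  unfold dR
  rw [Finset.mul_sum, ← Finset.sum_sub_distrib, ← Finset.sum_add_distrib]
  exact Finset.sum_congr rfl fun s _ => by simp only [Pi.sub_apply]; ring

lemma dR_add_self (u v : Fin n → ℝ) :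
    dR (u + v) (u + v) = dR u u + 2 * dR u v + dR v v := by
  unfold dR
  rw [Finset.mul_sum, ← Finset.sum_add_distrib, ← Finset.sum_add_distrib]
  exact Finset.sum_congr rfl fun s _ => by simp only [Pi.add_apply]; ring

lemma dR_add_right (x y z : Fin n → ℝ) : dR x (y + z) = dR x y + dR x z := by
  unfold dR
  rw [← Finset.sum_add_distrib]
  exact Finset.sum_congr rfl fun s _ => by simp only [Pi.add_apply]; ring

lemma dR_sum_right {β : Type*} (x : Fin n → ℝ) (t : Finset β) (f : β → (Fin n → ℝ)) :
    dR x (∑ i ∈ t, f i) = ∑ i ∈ t, dR x (f i) := by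
  unfold dR
  rw [Finset.sum_comm]
  exact Finset.sum_congr rfl fun s _ => by
    rw [Finset.sum_apply, Finset.mul_sum]

/-- linear map from coordinates -/
def mkLin {M : Type*} [AddCommGroup M] {p : ℕ} (v : Fin p → M) : (Fin p → ℤ) →ₗ[ℤ] M where
  toFun a := ∑ i, a i • v i
  map_add' a b := by
    simp only [Pi.add_apply, add_smul]
    rw [Finset.sum_add_distrib]
  map_smul' c a := by
    simp only [Pi.smul_apply, smul_eq_mul, RingHom.id_apply, mul_smul]
    rw [Finset.smul_sum]

lemma mkLin_apply {M : Type*} [AddCommGroup M] {p : ℕ} (v : Fin p → M) (a : Fin p → ℤ) :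
    mkLin v a = ∑ i, a i • v i := rfl

lemma mkLin_single {M : Type*} [AddCommGroup M] {p : ℕ} (v : Fin p → M) (m : Fin p) :
    mkLin v (Pi.single m 1) = v m := by
  rw [mkLin_apply]
  rw [Finset.sum_eq_single m]
  · simp
  · intro i _ hi; simp [Pi.single_apply, hi]
  · intro h; exact absurd (Finset.mem_univ m) h

lemma dR_mkLin {n p : ℕ} (v : Fin p → (Fin n → ℝ)) (a b : Fin p → ℤ) :
    dR (mkLin v a) (mkLin v b) = ∑ i, ∑ j, (a i : ℝ) * (b j : ℝ) * dR (v i) (v j) := by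
  rw [mkLin_apply, mkLin_apply]
  unfold dR
  calc ∑ s, (∑ i, (a i) • v i) s * (∑ j, (b j) • v j) s
      = ∑ s, ∑ i, ∑ j, ((a i : ℝ) * (b j : ℝ)) * (v i s * v j s) := by
        refine Finset.sum_congr rfl fun s _ => ?_
        rw [Finset.sum_apply, Finset.sum_apply, Finset.sum_mul_sum]
        exact Finset.sum_congr rfl fun i _ => Finset.sum_congr rfl fun j _ => by
          simp only [Pi.smul_apply, zsmul_eq_mul]; ring
    _ = ∑ i, ∑ j, ∑ s, ((a i : ℝ) * (b j : ℝ)) * (v i s * v j s) := by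
        rw [Finset.sum_comm]
        exact Finset.sum_congr rfl fun i _ => Finset.sum_comm
    _ = ∑ i, ∑ j, (a i : ℝ) * (b j : ℝ) * ∑ s, v i s * v j s := by
        exact Finset.sum_congr rfl fun i _ => Finset.sum_congr rfl fun j _ =>
          (Finset.mul_sum _ _ _).symm

lemma dZ_mkLin {p : ℕ} (v : Fin p → (Fin p → ℤ)) (a b : Fin p → ℤ) :
    dZ (mkLin v a) (mkLin v b) = ∑ i, ∑ j, (a i) * (b j) * dZ (v i) (v j) := by
  rw [mkLin_apply, mkLin_apply]
  unfold dZ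
  calc ∑ s, (∑ i, (a i) • v i) s * (∑ j, (b j) • v j) s
      = ∑ s, ∑ i, ∑ j, ((a i) * (b j)) * (v i s * v j s) := by
        refine Finset.sum_congr rfl fun s _ => ?_
        rw [Finset.sum_apply, Finset.sum_apply, Finset.sum_mul_sum]
        exact Finset.sum_congr rfl fun i _ => Finset.sum_congr rfl fun j _ => by
          simp only [Pi.smul_apply, smul_eq_mul]; ring
    _ = ∑ i, ∑ j, ∑ s, ((a i) * (b j)) * (v i s * v j s) := by
        rw [Finset.sum_comm]
        exact Finset.sum_congr rfl fun i _ => Finset.sum_comm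
    _ = ∑ i, ∑ j, (a i) * (b j) * ∑ s, v i s * v j s := by
        exact Finset.sum_congr rfl fun i _ => Finset.sum_congr rfl fun j _ =>
          (Finset.mul_sum _ _ _).symm

end Aux

set_option maxHeartbeats 4000000 in
/-- Let `L ⊂ ℝ^n` be a rootless positive-definite even (full)
lattice, `p` an odd prime, `g` a fixed-point free isometry of `L` of order `p`,
and `λ ∈ L*` with `gλ - λ ∈ L` and `λ ∉ L`.  If `γ ∈ λ + L` has norm `2`, then
the orbit `{gⁱγ | 0 ≤ i ≤ p-1}` consists of `p` distinct norm-2 vectors summing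
to zero, with `(γ | gⁱγ) ∈ {0, -1}` for `1 ≤ i ≤ p-1`, and the `ℤ`-span of the
orbit is isometric to the root lattice of type `A_{p-1}`. -/
theorem stmt_15 {n p : ℕ} (hp : p.Prime) (hodd : Odd p)
    (L : Submodule ℤ (Fin n → ℝ))
    (hspan : Submodule.span ℝ (L : Set (Fin n → ℝ)) = ⊤)
    (heven : ∀ v ∈ L, ∃ m : ℤ, ∑ i, v i * v i = 2 * m)
    (hrootless : ∀ v ∈ L, ∑ i, v i * v i ≠ 2)
    (g : (Fin n → ℝ) ≃ₗ[ℝ] (Fin n → ℝ))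
    (hiso : ∀ x y : Fin n → ℝ, ∑ i, g x i * g y i = ∑ i, x i * y i)
    (hgL : ∀ x ∈ L, g x ∈ L)
    (hord : g ^ p = 1)
    (hfpf : ∀ x ∈ L, g x = x → x = 0)
    (lam : Fin n → ℝ)
    (hdual : ∀ β ∈ L, ∃ m : ℤ, ∑ i, lam i * β i = m)
    (hlamL : lam ∉ L)
    (hglam : g lam - lam ∈ L)
    (γ : Fin n → ℝ) (hγ : γ - lam ∈ L) (hγ2 : ∑ i, γ i * γ i = 2) :
    (∀ i < p, ∀ j < p, (g ^ i) γ = (g ^ j) γ → i = j) ∧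
    (∑ i ∈ Finset.range p, (g ^ i) γ = 0) ∧
    (∀ i : ℕ, 1 ≤ i → i ≤ p - 1 →
      (∑ s, γ s * ((g ^ i) γ) s = 0 ∨ ∑ s, γ s * ((g ^ i) γ) s = -1)) ∧
    (∀ i : ℕ, ∑ s, ((g ^ i) γ) s * ((g ^ i) γ) s = 2) ∧
    ∃ e : Submodule.span ℤ {v : Fin n → ℝ | ∃ i : ℕ, v = (g ^ i) γ} ≃ₗ[ℤ] Ap p,
      ∀ a b : Submodule.span ℤ {v : Fin n → ℝ | ∃ i : ℕ, v = (g ^ i) γ},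
        ∑ s, (a : Fin n → ℝ) s * (b : Fin n → ℝ) s =
          ((∑ s, (e a : Fin p → ℤ) s * (e b : Fin p → ℤ) s : ℤ) : ℝ) := by
  classical
  haveI : Fact p.Prime := ⟨hp⟩
  haveI : NeZero p := ⟨hp.ne_zero⟩
  have hp3 : 3 ≤ p := by
    obtain ⟨m, hm⟩ := hodd
    have := hp.two_le
    omega
  -- power manipulation
  have hpow_apply : ∀ (x y : ℕ) (v : Fin n → ℝ), (g ^ x) ((g ^ y) v) = (g ^ (x + y)) v := by
    intro x y v; rw [pow_add]; rfl
  have hsucc : ∀ (m : ℕ) (v : Fin n → ℝ), (g ^ (m + 1)) v = g ((g ^ m) v) := by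
    intro m v
    have h := hpow_apply 1 m v
    rw [pow_one, Nat.add_comm] at h
    rw [← h]
  have hsucc' : ∀ (m : ℕ) (v : Fin n → ℝ), (g ^ (m + 1)) v = (g ^ m) (g v) := by
    intro m v
    have := hpow_apply m 1 v
    rw [pow_one] at this
    rw [← this]
  have hgmod : ∀ m : ℕ, g ^ m = g ^ (m % p) := by
    intro m
    conv_lhs => rw [← Nat.div_add_mod m p]
    rw [pow_add, pow_mul, hord, one_pow, one_mul]
  have hgcast : ∀ a b : ℕ, (a : ZMod p) = (b : ZMod p) → g ^ a = g ^ b := by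
    intro a b h
    rw [hgmod a, hgmod b, (ZMod.natCast_eq_natCast_iff' a b p).mp h]
  have hisoN : ∀ (m : ℕ) (x y : Fin n → ℝ), dR ((g ^ m) x) ((g ^ m) y) = dR x y := by
    intro m
    induction m with
    | zero => intro x y; simp
    | succ m ih =>
      intro x y
      rw [hsucc' m x, hsucc' m y, ih (g x) (g y)]
      exact hiso x y
  have hpowL : ∀ (m : ℕ) (x : Fin n → ℝ), x ∈ L → (g ^ m) x ∈ L := by
    intro m
    induction m with
    | zero => intro x hx; simpa using hx
    | succ m ih =>
      intro x hx
      rw [hsucc m x]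
      exact hgL _ (ih x hx)
  -- integrality of the form on L
  have hL2 : ∀ x ∈ L, ∀ y ∈ L, ∃ m : ℤ, dR x y = m := by
    intro x hx y hy
    obtain ⟨m1, hm1⟩ := heven x hx
    obtain ⟨m2, hm2⟩ := heven y hy
    obtain ⟨m3, hm3⟩ := heven (x + y) (L.add_mem hx hy)
    refine ⟨m3 - m1 - m2, ?_⟩
    have hexp : dR (x + y) (x + y) = dR x x + 2 * dR x y + dR y y := dR_add_self x y
    have e1 : dR x x = 2 * (m1 : ℝ) := by unfold dR; exact_mod_cast hm1
    have e2 : dR y y = 2 * (m2 : ℝ) := by unfold dR; exact_mod_cast hm2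
    have e3 : dR (x + y) (x + y) = 2 * (m3 : ℝ) := by unfold dR; exact_mod_cast hm3
    push_cast
    linarith
  -- γ's coset is preserved
  have hgγγ : g γ - γ ∈ L := by
    have h1 : g γ - γ = g (γ - lam) - (γ - lam) + (g lam - lam) := by
      rw [map_sub]; abel
    rw [h1]
    exact L.add_mem (L.sub_mem (hgL _ hγ) hγ) hglam
  have hδ : ∀ m : ℕ, (g ^ m) γ - γ ∈ L := by
    intro m
    induction m with
    | zero => simpa using L.zero_mem
    | succ m ih =>
      have h1 : (g ^ (m + 1)) γ - γ = g ((g ^ m) γ - γ) + (g γ - γ) := by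
        rw [map_sub, hsucc m γ]; abel
      rw [h1]
      exact L.add_mem (hgL _ ih) hgγγ
  -- the sum of the orbit of any vector vanishes
  have hNzero : ∀ x : Fin n → ℝ, ∑ i ∈ Finset.range p, (g ^ i) x = 0 := by
    have hker : ∀ x ∈ L, ∑ i ∈ Finset.range p, (g ^ i) x = 0 := by
      intro x hx
      set s : Fin n → ℝ := ∑ i ∈ Finset.range p, (g ^ i) x with hs
      have hsL : s ∈ L := Submodule.sum_mem _ fun i _ => hpowL i x hx
      have hgs : g s = s := by
        have h1 : g s = ∑ i ∈ Finset.range p, (g ^ (i + 1)) x := by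
          rw [hs, map_sum]
          exact Finset.sum_congr rfl fun i _ => (hsucc i x).symm
        have h4 : (g ^ p) x = x := by rw [hord]; rfl
        have h5 : (g ^ 0) x = x := by rw [pow_zero]; rfl
        have h2 : ∑ i ∈ Finset.range (p + 1), (g ^ i) x = s + x := by
          rw [Finset.sum_range_succ, h4, ← hs]
        have h3 : ∑ i ∈ Finset.range (p + 1), (g ^ i) x
            = (∑ i ∈ Finset.range p, (g ^ (i + 1)) x) + x := by
          rw [Finset.sum_range_succ', h5]
        have h6 : (∑ i ∈ Finset.range p, (g ^ (i + 1)) x) + x = s + x := h3 ▸ h2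
        rw [h1]
        exact add_right_cancel h6
      exact hfpf s hsL hgs
    -- extend to all of ℝ^n by fullness
    let f : (Fin n → ℝ) →ₗ[ℝ] (Fin n → ℝ) :=
      { toFun := fun x => ∑ i ∈ Finset.range p, (g ^ i) x
        map_add' := by
          intro x y
          rw [← Finset.sum_add_distrib]
          exact Finset.sum_congr rfl fun i _ => map_add _ _ _
        map_smul' := by
          intro c x
          simp only [RingHom.id_apply]
          rw [Finset.smul_sum]
          exact Finset.sum_congr rfl fun i _ => map_smul _ _ _ }
    have hfdef : ∀ x, f x = ∑ i ∈ Finset.range p, (g ^ i) x := fun x => rfl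
    have hLker : (L : Set (Fin n → ℝ)) ⊆ (LinearMap.ker f : Set (Fin n → ℝ)) := by
      intro x hx
      simp only [SetLike.mem_coe, LinearMap.mem_ker]
      rw [hfdef]
      exact hker x hx
    have : LinearMap.ker f = ⊤ := by
      rw [eq_top_iff, ← hspan]
      exact Submodule.span_le.mpr hLker
    intro x
    rw [← hfdef]
    exact LinearMap.mem_ker.mp (this ▸ Submodule.mem_top)
  have hγγ2 : dR γ γ = 2 := hγ2
  have hp0 : (p : ℝ) ≠ 0 := Nat.cast_ne_zero.mpr hp.ne_zero
  -- no nonzero power of g fixes γ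
  have hfix : ∀ a : ℕ, (g ^ a) γ = γ → (a : ZMod p) = 0 := by
    intro a ha
    by_contra hne
    have hrep : ∀ t : ℕ, (g ^ (t * a)) γ = γ := by
      intro t
      induction t with
      | zero => rw [Nat.zero_mul, pow_zero]; rfl
      | succ t ih =>
        have he : (t + 1) * a = a + t * a := by ring
        rw [he, ← hpow_apply a (t * a) γ, ih, ha]
    have h1 : ((((a : ZMod p)⁻¹).val : ℕ) : ZMod p) = (a : ZMod p)⁻¹ :=
      ZMod.natCast_rightInverse _
    have hb : ((((a : ZMod p)⁻¹).val * a : ℕ)) = ((1 : ℕ) : ZMod p) := by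
      rw [Nat.cast_mul, h1, Nat.cast_one]
      exact inv_mul_cancel₀ hne
    have hg1 : g γ = γ := by
      have h2 : g ^ (((a : ZMod p)⁻¹).val * a) = g ^ 1 := hgcast _ 1 hb
      have h3 := hrep ((a : ZMod p)⁻¹).val
      rw [h2, pow_one] at h3
      exact h3
    have hall : ∀ i : ℕ, (g ^ i) γ = γ := by
      intro i
      induction i with
      | zero => rw [pow_zero]; rfl
      | succ i ih => rw [hsucc i γ, ih, hg1]
    have h3 : ∑ i ∈ Finset.range p, (g ^ i) γ = p • γ := by
      rw [Finset.sum_congr rfl fun i _ => hall i, Finset.sum_const, Finset.card_range]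
    have h4 : p • γ = 0 := by rw [← h3]; exact hNzero γ
    have h5 : γ = 0 := by
      funext s
      have h6 := congrFun h4 s
      simp only [Pi.smul_apply, smul_eq_mul, nsmul_eq_mul, Pi.zero_apply] at h6
      exact (mul_eq_zero.mp h6).resolve_left hp0
    rw [h5] at hγ2
    simp at hγ2
  -- Gram entries depend only on the difference of exponents
  have hgram : ∀ a b : ℕ, dR ((g ^ a) γ) ((g ^ b) γ) = dR γ ((g ^ (b + (p - 1) * a)) γ) := by
    intro a b
    have h1 := hisoN ((p - 1) * a) ((g ^ a) γ) ((g ^ b) γ)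
    rw [hpow_apply, hpow_apply] at h1
    have h2 : (p - 1) * a + a = p * a := by
      obtain ⟨q, rfl⟩ : ∃ q, p = q + 1 := ⟨p - 1, by omega⟩
      simp [Nat.succ_mul]
    have h4 : (g ^ ((p - 1) * a + a)) γ = γ := by
      rw [h2, pow_mul, hord, one_pow]; rfl
    rw [h4, Nat.add_comm ((p - 1) * a) b] at h1
    exact h1.symm
  have hnorm : ∀ a : ℕ, dR ((g ^ a) γ) ((g ^ a) γ) = 2 := fun a => by
    rw [hisoN a γ γ]; exact hγ2
  have hceq : ∀ a b : ℕ, (a : ZMod p) = (b : ZMod p) → dR γ ((g ^ a) γ) = dR γ ((g ^ b) γ) := by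
    intro a b h
    rw [hgcast a b h]
  have h2Z : (2 : ZMod p) ≠ 0 := by
    intro h
    have h1 : ((2 : ℕ) : ZMod p) = 0 := by exact_mod_cast h
    have h2 := (ZMod.natCast_eq_zero_iff 2 p).mp h1
    have := Nat.le_of_dvd (by norm_num) h2
    omega
  -- the possible inner product values
  have hval : ∀ s : ℕ, 1 ≤ s → s < p → dR γ ((g ^ s) γ) = 0 ∨ dR γ ((g ^ s) γ) = -1 := by
    intro s hs1 hs2
    obtain ⟨m1, hm1⟩ := hdual ((g ^ s) γ - γ) (hδ s)
    obtain ⟨m2, hm2⟩ := hL2 (γ - lam) hγ ((g ^ s) γ - γ) (hδ s)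
    have hm1' : dR lam ((g ^ s) γ - γ) = (m1 : ℝ) := hm1
    have hint : dR γ ((g ^ s) γ) = ((2 + m1 + m2 : ℤ) : ℝ) := by
      have he : γ + ((g ^ s) γ - γ) = (g ^ s) γ := by abel
      have hd : dR γ ((g ^ s) γ) = dR γ γ + dR γ ((g ^ s) γ - γ) := by
        rw [← dR_add_right, he]
      have hsplit : dR γ ((g ^ s) γ - γ)
          = dR lam ((g ^ s) γ - γ) + dR (γ - lam) ((g ^ s) γ - γ) := by
        unfold dR
        rw [← Finset.sum_add_distrib]
        exact Finset.sum_congr rfl fun t _ => by simp only [Pi.sub_apply]; ring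
      rw [hd, hsplit, hγγ2, hm1', hm2]
      push_cast
      ring
    have hub : dR γ ((g ^ s) γ) ≤ 2 := by
      have h0 := dR_self_nonneg (γ - (g ^ s) γ)
      rw [dR_sub_self, hγγ2, hnorm s] at h0
      linarith
    have hlb : -2 ≤ dR γ ((g ^ s) γ) := by
      have h0 := dR_self_nonneg (γ + (g ^ s) γ)
      rw [dR_add_self, hγγ2, hnorm s] at h0
      linarith
    have hsdvd : ¬ ((s : ZMod p) = 0) := by
      intro h3
      have h4 : (p : ℕ) ∣ s := (ZMod.natCast_eq_zero_iff s p).mp h3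
      have := Nat.le_of_dvd (by omega) h4
      omega
    have hne2 : dR γ ((g ^ s) γ) ≠ 2 := by
      intro h
      have h0 : dR (γ - (g ^ s) γ) (γ - (g ^ s) γ) = 0 := by
        rw [dR_sub_self, hγγ2, hnorm s, h]; ring
      have h1 := dR_self_eq_zero h0
      have h2 : (g ^ s) γ = γ := (sub_eq_zero.mp h1).symm
      exact hsdvd (hfix s h2)
    have hnem2 : dR γ ((g ^ s) γ) ≠ -2 := by
      intro h
      have h0 : dR (γ + (g ^ s) γ) (γ + (g ^ s) γ) = 0 := by
        rw [dR_add_self, hγγ2, hnorm s, h]; ring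
      have h1 := dR_self_eq_zero h0
      have hsγ : (g ^ s) γ = -γ := (neg_eq_of_add_eq_zero_right h1).symm
      have h3 : (g ^ (s + s)) γ = γ := by
        calc (g ^ (s + s)) γ = (g ^ s) ((g ^ s) γ) := (hpow_apply s s γ).symm
          _ = (g ^ s) (-γ) := by rw [hsγ]
          _ = -((g ^ s) γ) := map_neg _ _
          _ = -(-γ) := by rw [hsγ]
          _ = γ := neg_neg γ
      have h4 := hfix (s + s) h3
      push_cast at h4
      have h5 : (2 : ZMod p) * (s : ZMod p) = 0 := by ring_nf; linear_combination h4
      rcases mul_eq_zero.mp h5 with h6 | h6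
      · exact h2Z h6
      · exact hsdvd h6
    have hne1 : dR γ ((g ^ s) γ) ≠ 1 := by
      intro h
      have hvL : γ - (g ^ s) γ ∈ L := by
        have h7 := L.neg_mem (hδ s)
        rw [neg_sub] at h7
        exact h7
      have h0 : dR (γ - (g ^ s) γ) (γ - (g ^ s) γ) = 2 := by
        rw [dR_sub_self, hγγ2, hnorm s, h]; ring
      exact hrootless _ hvL h0
    rw [hint] at hub hlb hne2 hnem2 hne1 ⊢
    have hub' : 2 + m1 + m2 ≤ 2 := by exact_mod_cast hub
    have hlb' : -2 ≤ 2 + m1 + m2 := by exact_mod_cast hlb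
    have ha2 : 2 + m1 + m2 ≠ 2 := fun hq => hne2 (by rw [hq]; norm_num)
    have ham2 : 2 + m1 + m2 ≠ -2 := fun hq => hnem2 (by rw [hq]; norm_num)
    have ha1 : 2 + m1 + m2 ≠ 1 := fun hq => hne1 (by rw [hq]; norm_num)
    have : 2 + m1 + m2 = 0 ∨ 2 + m1 + m2 = -1 := by omega
    rcases this with h | h
    · left; rw [h]; norm_num
    · right; rw [h]; norm_num
  -- the sum of the inner products over the orbit vanishes
  have hCsum : ∑ i ∈ Finset.range p, dR γ ((g ^ i) γ) = 0 := by
    rw [← dR_sum_right γ (Finset.range p) (fun i => (g ^ i) γ), hNzero γ]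
    unfold dR
    simp
  have hIcosum : ∑ s ∈ Finset.Ico 1 p, dR γ ((g ^ s) γ) = -2 := by
    have h1 : ∑ i ∈ Finset.range p, dR γ ((g ^ i) γ)
        = dR γ ((g ^ 0) γ) + ∑ s ∈ Finset.Ico 1 p, dR γ ((g ^ s) γ) := by
      rw [Finset.range_eq_Ico]
      exact Finset.sum_eq_sum_Ico_succ_bot (by omega) _
    have h0 : dR γ ((g ^ 0) γ) = 2 := by rw [pow_zero]; exact hγγ2
    rw [h1, h0] at hCsum
    linarith
  set T : Finset ℕ := (Finset.Ico 1 p).filter (fun s => dR γ ((g ^ s) γ) = -1) with hT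
  have hTsum : ∑ s ∈ Finset.Ico 1 p, dR γ ((g ^ s) γ) = -(T.card : ℝ) := by
    have hsplit := Finset.sum_filter_add_sum_filter_not (Finset.Ico 1 p)
      (fun s => dR γ ((g ^ s) γ) = -1) (fun s => dR γ ((g ^ s) γ))
    have hA : ∑ s ∈ T, dR γ ((g ^ s) γ) = -(T.card : ℝ) := by
      rw [Finset.sum_congr rfl (fun s hs => (Finset.mem_filter.mp hs).2), Finset.sum_const]
      simp [hT]
    have hB : ∑ s ∈ (Finset.Ico 1 p).filter (fun s => ¬ dR γ ((g ^ s) γ) = -1),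
        dR γ ((g ^ s) γ) = 0 := by
      apply Finset.sum_eq_zero
      intro s hs
      obtain ⟨hsI, hsn⟩ := Finset.mem_filter.mp hs
      obtain ⟨hb1, hb2⟩ := Finset.mem_Ico.mp hsI
      rcases hval s hb1 hb2 with h | h
      · exact h
      · exact absurd h hsn
    rw [← hT] at hsplit
    rw [← hsplit, hA, hB, add_zero]
  have hTcard : T.card = 2 := by
    have h1 : -(T.card : ℝ) = -2 := by rw [← hTsum]; exact hIcosum
    have h2 : -(T.card : ℝ) = -(2 : ℝ) := by rw [h1]
    exact_mod_cast neg_inj.mp h2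
  obtain ⟨k, hkT⟩ : T.Nonempty := Finset.card_pos.mp (by omega)
  have hkI := (Finset.mem_filter.mp hkT).1
  have hk1 : 1 ≤ k := (Finset.mem_Ico.mp hkI).1
  have hk2 : k < p := (Finset.mem_Ico.mp hkI).2
  have hkval : dR γ ((g ^ k) γ) = -1 := (Finset.mem_filter.mp hkT).2
  -- negation symmetry of inner product values
  have hneg : ∀ a b : ℕ, ((b : ZMod p)) = -((a : ZMod p)) →
      dR γ ((g ^ b) γ) = dR γ ((g ^ a) γ) := by
    intro a b hab
    have h1 : dR ((g ^ a) γ) ((g ^ 0) γ) = dR γ ((g ^ (0 + (p - 1) * a)) γ) := hgram a 0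
    rw [Nat.zero_add] at h1
    have h2 : dR ((g ^ a) γ) ((g ^ 0) γ) = dR γ ((g ^ a) γ) := by
      rw [pow_zero]
      exact dR_symm _ _
    have h3 : ((((p - 1) * a : ℕ)) : ZMod p) = ((b : ℕ) : ZMod p) := by
      rw [Nat.cast_mul, Nat.cast_sub hp.one_le, ZMod.natCast_self, hab]; ring
    exact (hceq b ((p - 1) * a) h3.symm).trans (h1.symm.trans h2)
  have hpk : p - k ∈ T := by
    refine Finset.mem_filter.mpr ⟨Finset.mem_Ico.mpr ⟨by omega, by omega⟩, ?_⟩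
    have h1 : (((p - k : ℕ)) : ZMod p) = -((k : ℕ) : ZMod p) := by
      rw [Nat.cast_sub (le_of_lt hk2), ZMod.natCast_self]; ring
    rw [hneg k (p - k) h1, hkval]
  have hkpk : k ≠ p - k := by
    intro h
    obtain ⟨m, hm⟩ := hodd
    omega
  have hTeq : T = {k, p - k} := by
    refine (Finset.eq_of_subset_of_card_le ?_ ?_).symm
    · intro x hx
      rcases Finset.mem_insert.mp hx with h | h
      · rwa [h]
      · rw [Finset.mem_singleton.mp h]; exact hpk
    · rw [hTcard, Finset.card_insert_of_notMem (by simpa using hkpk), Finset.card_singleton]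
  have hκ0 : ((k : ℕ) : ZMod p) ≠ 0 := by
    intro h
    have h4 := (ZMod.natCast_eq_zero_iff k p).mp h
    have := Nat.le_of_dvd (by omega) h4
    omega
  -- full characterization of inner products on the orbit
  have hcharZ : ∀ m : ℕ, dR γ ((g ^ m) γ)
      = if (m : ZMod p) = 0 then 2
        else if (m : ZMod p) = ((k : ℕ) : ZMod p) ∨ (m : ZMod p) = -((k : ℕ) : ZMod p) then -1
        else 0 := by
    intro m
    have hzv : ((((m : ZMod p).val : ℕ)) : ZMod p) = (m : ZMod p) := ZMod.natCast_rightInverse _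
    have hmz : dR γ ((g ^ m) γ) = dR γ ((g ^ (m : ZMod p).val) γ) := hceq m (m : ZMod p).val hzv.symm
    by_cases h0 : (m : ZMod p) = 0
    · rw [if_pos h0, hmz]
      have hv0 : (m : ZMod p).val = 0 := by rw [h0, ZMod.val_zero]
      rw [hv0, pow_zero]
      exact hγγ2
    · rw [if_neg h0]
      have hv1 : 1 ≤ (m : ZMod p).val := by
        have h5 : (m : ZMod p).val ≠ 0 := fun h6 => h0 (by rwa [ZMod.val_eq_zero] at h6)
        omega
      have hv2 : (m : ZMod p).val < p := ZMod.val_lt _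
      by_cases h1 : (m : ZMod p) = ((k : ℕ) : ZMod p) ∨ (m : ZMod p) = -((k : ℕ) : ZMod p)
      · rw [if_pos h1, hmz]
        have hin : (m : ZMod p).val ∈ T := by
          rw [hTeq]
          rcases h1 with h | h
          · have hval' : (m : ZMod p).val = k := by rw [h, ZMod.val_cast_of_lt hk2]
            simp [hval']
          · have h2 : (m : ZMod p) = (((p - k : ℕ)) : ZMod p) := by
              rw [h, Nat.cast_sub (le_of_lt hk2), ZMod.natCast_self]; ring
            have hval' : (m : ZMod p).val = p - k := by
              rw [h2, ZMod.val_cast_of_lt (by omega)]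
            simp [hval']
        exact (Finset.mem_filter.mp hin).2
      · rw [if_neg h1, hmz]
        rcases hval (m : ZMod p).val hv1 hv2 with h | h
        · exact h
        · exfalso
          have hin : (m : ZMod p).val ∈ T :=
            Finset.mem_filter.mpr ⟨Finset.mem_Ico.mpr ⟨hv1, hv2⟩, h⟩
          rw [hTeq] at hin
          rcases Finset.mem_insert.mp hin with h2 | h2
          · exact h1 (Or.inl (by rw [← hzv, h2]))
          · refine h1 (Or.inr ?_)
            rw [Finset.mem_singleton] at h2
            rw [← hzv, h2, Nat.cast_sub (le_of_lt hk2), ZMod.natCast_self]; ring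
  -- Fin p bookkeeping
  have hι : ∀ i : Fin p, (((i : ℕ) : ZMod p)).val = (i : ℕ) := fun i =>
    ZMod.val_cast_of_lt i.isLt
  have hιinj : ∀ i j : Fin p, (((i : ℕ) : ZMod p)) = (((j : ℕ) : ZMod p)) → i = j := by
    intro i j h
    have h2 := congrArg ZMod.val h
    rw [hι, hι] at h2
    exact Fin.ext h2
  have hιadd1 : ∀ i : Fin p, ((((i + 1 : Fin p) : ℕ)) : ZMod p) = ((i : ℕ) : ZMod p) + 1 := by
    intro i
    have hv : ((i + 1 : Fin p) : ℕ) = ((i : ℕ) + (1 : Fin p).val) % p := by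
      rw [Fin.add_def]
    rw [hv, ZMod.natCast_mod, Nat.cast_add, Fin.val_one', ZMod.natCast_mod, Nat.cast_one]
  -- translation between ZMod p conditions and Fin p conditions
  have hc0 : ∀ i j : Fin p,
      ((((j : ℕ) : ZMod p) - ((i : ℕ) : ZMod p)) * ((k : ℕ) : ZMod p) = 0) ↔ i = j := by
    intro i j
    constructor
    · intro h
      rcases mul_eq_zero.mp h with h | h
      · exact (hιinj j i (sub_eq_zero.mp h)).symm
      · exact absurd h hκ0
    · intro h; subst h; rw [sub_self, zero_mul]
  have hcκ : ∀ i j : Fin p,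
      ((((j : ℕ) : ZMod p) - ((i : ℕ) : ZMod p)) * ((k : ℕ) : ZMod p) = ((k : ℕ) : ZMod p))
        ↔ j = i + 1 := by
    intro i j
    constructor
    · intro h
      have h2 : (((j : ℕ) : ZMod p) - ((i : ℕ) : ZMod p)) * ((k : ℕ) : ZMod p)
          = 1 * ((k : ℕ) : ZMod p) := by rw [h, one_mul]
      have h1 := mul_right_cancel₀ hκ0 h2
      apply hιinj
      rw [hιadd1 i]
      linear_combination h1
    · intro h
      subst h
      rw [hιadd1 i]
      ring
  have hcmκ : ∀ i j : Fin p,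
      ((((j : ℕ) : ZMod p) - ((i : ℕ) : ZMod p)) * ((k : ℕ) : ZMod p) = -((k : ℕ) : ZMod p))
        ↔ i = j + 1 := by
    intro i j
    constructor
    · intro h
      have h2 : (((j : ℕ) : ZMod p) - ((i : ℕ) : ZMod p)) * ((k : ℕ) : ZMod p)
          = (-1) * ((k : ℕ) : ZMod p) := by rw [h]; ring
      have h1 := mul_right_cancel₀ hκ0 h2
      apply hιinj
      rw [hιadd1 j]
      linear_combination -h1
    · intro h
      subst h
      rw [hιadd1 j]
      ring
  -- the Gram matrix of the reordered orbit
  have hGram : ∀ i j : Fin p,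
      dR ((g ^ ((i : ℕ) * k)) γ) ((g ^ ((j : ℕ) * k)) γ)
        = (((if i = j then 2 else 0) - (if i = j + 1 then 1 else 0)
            - (if i + 1 = j then 1 else 0) : ℤ) : ℝ) := by
    intro i j
    rw [hgram, hcharZ]
    have hcast : ((((j : ℕ) * k + (p - 1) * ((i : ℕ) * k) : ℕ)) : ZMod p)
        = ((((j : ℕ) : ZMod p)) - (((i : ℕ)) : ZMod p)) * ((k : ℕ) : ZMod p) := by
      push_cast [Nat.cast_sub hp.one_le]
      rw [ZMod.natCast_self]
      ring
    rw [hcast]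
    by_cases h1 : i = j
    · rw [if_pos ((hc0 i j).mpr h1), if_pos h1]
      subst h1
      have hn1 : ¬ i = i + 1 := by
        intro h
        have h2 := (hcκ i i).mpr h
        rw [sub_self, zero_mul] at h2
        exact hκ0 h2.symm
      rw [if_neg hn1, if_neg (fun h => hn1 h.symm)]
      norm_num
    · rw [if_neg (fun h => h1 ((hc0 i j).mp h)), if_neg h1]
      by_cases h2 : j = i + 1
      · rw [if_pos (Or.inl ((hcκ i j).mpr h2))]
        have h3 : ¬ i = j + 1 := by
          intro h4
          have h5 := congrArg (fun t : Fin p => ((t : ℕ) : ZMod p)) h4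
          rw [hιadd1 j] at h5
          have h6 := congrArg (fun t : Fin p => ((t : ℕ) : ZMod p)) h2
          rw [hιadd1 i] at h6
          exact h2Z (by linear_combination - h5 - h6)
        rw [if_neg h3, if_pos h2.symm]
        norm_num
      · by_cases h3 : i = j + 1
        · rw [if_pos (Or.inr ((hcmκ i j).mpr h3)), if_pos h3, if_neg (fun h => h2 h.symm)]
          norm_num
        · have h4 : ¬((((j : ℕ) : ZMod p) - ((i : ℕ) : ZMod p)) * ((k : ℕ) : ZMod p)
              = ((k : ℕ) : ZMod p)
            ∨ (((j : ℕ) : ZMod p) - ((i : ℕ) : ZMod p)) * ((k : ℕ) : ZMod p)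
              = -((k : ℕ) : ZMod p)) := by
            rintro (h | h)
            · exact h2 ((hcκ i j).mp h)
            · exact h3 ((hcmκ i j).mp h)
          rw [if_neg h4, if_neg h3, if_neg (fun h => h2 h.symm)]
          norm_num
  refine ⟨?_, hNzero γ, ?_, ?_, ?_⟩
  · -- distinctness
    intro i hi j hj h
    have h1 : dR ((g ^ i) γ) ((g ^ j) γ) = 2 := by rw [h]; exact hnorm j
    rw [hgram, hcharZ] at h1
    have h0 : ((j + (p - 1) * i : ℕ) : ZMod p) = 0 := by
      by_contra h0
      rw [if_neg h0] at h1
      split_ifs at h1 <;> norm_num at h1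
    have hd : ((j + (p - 1) * i : ℕ) : ZMod p) = (j : ZMod p) - (i : ZMod p) := by
      push_cast [Nat.cast_sub hp.one_le]
      rw [ZMod.natCast_self]
      ring
    rw [hd] at h0
    have h2 : ((j : ℕ) : ZMod p) = ((i : ℕ) : ZMod p) := sub_eq_zero.mp h0
    have h3 := (ZMod.natCast_eq_natCast_iff' j i p).mp h2
    rw [Nat.mod_eq_of_lt hj, Nat.mod_eq_of_lt hi] at h3
    omega
  · -- inner product values
    intro i hi1 hi2
    exact hval i hi1 (by omega)
  · -- norms
    intro i
    exact hnorm i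
  · -- the isometry with the A_{p-1} lattice
    set w : Fin p → (Fin n → ℝ) := fun i => (g ^ ((i : ℕ) * k)) γ with hw
    set α : Fin p → (Fin p → ℤ) :=
      fun i => fun s => (if i = s then (1 : ℤ) else 0) - (if i + 1 = s then 1 else 0) with hα
    set Φ : (Fin p → ℤ) →ₗ[ℤ] (Fin n → ℝ) := mkLin w with hΦ
    set Ψ : (Fin p → ℤ) →ₗ[ℤ] (Fin p → ℤ) := mkLin α with hΨ
    have hprod : ∀ (a b : Fin p),
        (∑ s, (if a = s then (1 : ℤ) else 0) * (if b = s then 1 else 0))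
          = if a = b then 1 else 0 := by
      intro a b
      have h1 : ∀ s : Fin p, (if a = s then (1 : ℤ) else 0) * (if b = s then 1 else 0)
          = if a = s then (if b = s then (1 : ℤ) else 0) else 0 := fun s => by
        split_ifs <;> ring
      rw [Finset.sum_congr rfl fun s _ => h1 s, Finset.sum_ite_eq]
      simp only [Finset.mem_univ, if_true]
      by_cases h : a = b
      · simp [h]
      · rw [if_neg (fun hh => h hh.symm), if_neg h]
    have hαdot : ∀ i j : Fin p, dZ (α i) (α j)
        = (if i = j then 2 else 0) - (if i = j + 1 then 1 else 0)
          - (if i + 1 = j then 1 else 0) := by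
      intro i j
      have hexp : dZ (α i) (α j)
          = (∑ s, (if i = s then (1 : ℤ) else 0) * (if j = s then 1 else 0))
            - (∑ s, (if i = s then (1 : ℤ) else 0) * (if j + 1 = s then 1 else 0))
            - (∑ s, (if i + 1 = s then (1 : ℤ) else 0) * (if j = s then 1 else 0))
            + (∑ s, (if i + 1 = s then (1 : ℤ) else 0) * (if j + 1 = s then 1 else 0)) := by
        unfold dZ
        rw [← Finset.sum_sub_distrib, ← Finset.sum_sub_distrib, ← Finset.sum_add_distrib]
        refine Finset.sum_congr rfl fun s _ => ?_
        simp only [hα]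
        ring
      rw [hexp, hprod, hprod, hprod, hprod]
      have h11 : (if i + 1 = j + 1 then (1 : ℤ) else 0) = if i = j then 1 else 0 := by
        by_cases h : i = j
        · rw [if_pos h, if_pos (by rw [h])]
        · rw [if_neg h, if_neg (fun hh => h (add_right_cancel hh))]
      rw [h11]
      by_cases h : i = j <;> simp [h] <;> ring
    have hGram' : ∀ i j : Fin p, dR (w i) (w j) = ((dZ (α i) (α j) : ℤ) : ℝ) := by
      intro i j
      have hwi : w i = (g ^ ((i : ℕ) * k)) γ := rfl
      have hwj : w j = (g ^ ((j : ℕ) * k)) γ := rfl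
      rw [hwi, hwj, hGram i j, hαdot i j]
    have hΦrange : LinearMap.range Φ
        = Submodule.span ℤ {v : Fin n → ℝ | ∃ i : ℕ, v = (g ^ i) γ} := by
      apply le_antisymm
      · rintro x ⟨a, rfl⟩
        rw [hΦ, mkLin_apply]
        exact Submodule.sum_mem _ fun i _ => Submodule.smul_mem _ _
          (Submodule.subset_span ⟨(i : ℕ) * k, rfl⟩)
      · rw [Submodule.span_le]
        rintro v ⟨i0, rfl⟩
        have hm : ((((i0 : ZMod p)) * ((k : ℕ) : ZMod p)⁻¹).val : ℕ) < p := ZMod.val_lt _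
        refine ⟨Pi.single (⟨_, hm⟩ : Fin p) 1, ?_⟩
        rw [hΦ, mkLin_single]
        show (g ^ (((i0 : ZMod p) * ((k : ℕ) : ZMod p)⁻¹).val * k)) γ = (g ^ i0) γ
        have hcast : (((((i0 : ZMod p) * ((k : ℕ) : ZMod p)⁻¹).val * k : ℕ)) : ZMod p)
            = ((i0 : ℕ) : ZMod p) := by
          have h5 : ((((i0 : ZMod p) * ((k : ℕ) : ZMod p)⁻¹).val : ℕ) : ZMod p)
              = (i0 : ZMod p) * ((k : ℕ) : ZMod p)⁻¹ := ZMod.natCast_rightInverse _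
          rw [Nat.cast_mul, h5, mul_assoc, inv_mul_cancel₀ hκ0, mul_one]
        rw [hgcast _ i0 hcast]
    have hΨs : ∀ (a : Fin p → ℤ) (s : Fin p), (Ψ a) s = a s - a (s - 1) := by
      intro a s
      have h1 : (Ψ a) s = ∑ i, a i * α i s := by
        rw [hΨ, mkLin_apply, Finset.sum_apply]
        exact Finset.sum_congr rfl fun i _ => by
          simp only [Pi.smul_apply, smul_eq_mul]
      rw [h1]
      have h2 : ∀ i : Fin p, a i * α i s
          = (if i = s then a i else 0) - (if i = s - 1 then a i else 0) := by
        intro i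
        simp only [hα]
        have h3 : (i + 1 = s) ↔ (i = s - 1) := by
          constructor
          · intro h; rw [← h]; abel
          · intro h; rw [h]; abel
        rw [mul_sub]
        congr 1
        · split_ifs <;> ring
        · rw [if_congr h3 rfl rfl]
          split_ifs <;> ring
      rw [Finset.sum_congr rfl fun i _ => h2 i, Finset.sum_sub_distrib,
        Finset.sum_ite_eq', Finset.sum_ite_eq']
      simp
    have hsub1val : ∀ s : Fin p, ((s - 1 : Fin p) : ℕ) = (((s : ℕ)) + (p - 1)) % p := by
      intro s
      rw [Fin.sub_def]
      simp only [Fin.val_one']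
      rw [Nat.mod_eq_of_lt (show 1 < p by omega), Nat.add_comm]
    have hBG : ∀ a b : Fin p → ℤ, dR (Φ a) (Φ b) = ((dZ (Ψ a) (Ψ b) : ℤ) : ℝ) := by
      intro a b
      rw [hΦ, hΨ, dR_mkLin, dZ_mkLin]
      push_cast
      refine Finset.sum_congr rfl fun i _ => Finset.sum_congr rfl fun j _ => ?_
      rw [hGram' i j]
    have hker : LinearMap.ker Φ = LinearMap.ker Ψ := by
      ext a
      simp only [LinearMap.mem_ker]
      constructor
      · intro h
        have h1 : ((dZ (Ψ a) (Ψ a) : ℤ) : ℝ) = 0 := by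
          rw [← hBG, h]
          unfold dR
          simp
        exact dZ_self_eq_zero (by exact_mod_cast h1)
      · intro h
        have h1 : dR (Φ a) (Φ a) = 0 := by
          rw [hBG, h]
          unfold dZ
          simp
        exact dR_self_eq_zero h1
    have hApmem : ∀ x : Fin p → ℤ, x ∈ Ap p ↔ ∑ s, x s = 0 := fun x => Iff.rfl
    have hΨrange : LinearMap.range Ψ = Ap p := by
      apply le_antisymm
      · rintro x ⟨a, rfl⟩
        refine (hApmem _).mpr ?_
        have h1 : ∑ s, (Ψ a) s = ∑ s, (a s - a (s - 1)) :=
          Finset.sum_congr rfl fun s _ => hΨs a s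
        rw [h1, Finset.sum_sub_distrib]
        have h2 : ∑ s : Fin p, a (s - 1) = ∑ s : Fin p, a s :=
          Fintype.sum_equiv (Equiv.subRight (1 : Fin p)) _ _ (fun s => rfl)
        rw [h2, sub_self]
      · intro u hu
        have hu0 : ∑ s, u s = 0 := (hApmem u).mp hu
        have key : ∀ s : Fin p,
            (∑ j ∈ Finset.univ.filter (fun j => j ≤ s), u j)
              - (∑ j ∈ Finset.univ.filter (fun j => j ≤ s - 1), u j) = u s := by
          intro s
          by_cases hs : s = 0
          · subst hs
            have hf1 : Finset.univ.filter (fun j : Fin p => j ≤ 0) = {0} := by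
              ext j
              simp only [Finset.mem_filter, Finset.mem_univ, true_and,
                Finset.mem_singleton, Fin.le_def, Fin.ext_iff, Fin.val_zero]
              omega
            have hf2 : Finset.univ.filter (fun j : Fin p => j ≤ (0 - 1 : Fin p))
                = Finset.univ := by
              apply Finset.filter_true_of_mem
              intro j _
              rw [Fin.le_def, hsub1val]
              have h6 : (((0 : Fin p) : ℕ) + (p - 1)) % p = p - 1 := by
                rw [Fin.val_zero, Nat.zero_add, Nat.mod_eq_of_lt (by omega)]
              rw [h6]
              have := j.isLt
              omega
            rw [hf1, hf2, Finset.sum_singleton, hu0, sub_zero]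
          · have hsv : 1 ≤ (s : ℕ) := by
              have h7 : (s : ℕ) ≠ 0 := fun h => hs (Fin.ext (by rw [h, Fin.val_zero]))
              omega
            have hs1 : ((s - 1 : Fin p) : ℕ) = (s : ℕ) - 1 := by
              rw [hsub1val]
              have h3 : (s : ℕ) + (p - 1) = p + ((s : ℕ) - 1) := by omega
              have h8 := s.isLt
              rw [h3, Nat.add_mod_left, Nat.mod_eq_of_lt (by omega)]
            have hfil : Finset.univ.filter (fun j : Fin p => j ≤ s)
                = insert s (Finset.univ.filter (fun j : Fin p => j ≤ s - 1)) := by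
              ext j
              simp only [Finset.mem_filter, Finset.mem_univ, true_and,
                Finset.mem_insert, Fin.le_def, hs1, Fin.ext_iff]
              omega
            have hnot : s ∉ Finset.univ.filter (fun j : Fin p => j ≤ s - 1) := by
              simp only [Finset.mem_filter, Finset.mem_univ, true_and, Fin.le_def, hs1]
              omega
            rw [hfil, Finset.sum_insert hnot]
            ring
        refine ⟨fun i => ∑ j ∈ Finset.univ.filter (fun j => j ≤ i), u j, ?_⟩
        funext s
        rw [hΨs]
        exact key s
    -- assemble the equivalence
    let E1 : (Submodule.span ℤ {v : Fin n → ℝ | ∃ i : ℕ, v = (g ^ i) γ})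
        ≃ₗ[ℤ] LinearMap.range Φ := LinearEquiv.ofEq _ _ hΦrange.symm
    let Eq1 : ((Fin p → ℤ) ⧸ LinearMap.ker Φ) ≃ₗ[ℤ] LinearMap.range Φ :=
      Φ.quotKerEquivRange
    let Eker : ((Fin p → ℤ) ⧸ LinearMap.ker Φ) ≃ₗ[ℤ] ((Fin p → ℤ) ⧸ LinearMap.ker Ψ) :=
      Submodule.quotEquivOfEq _ _ hker
    let Eq2 : ((Fin p → ℤ) ⧸ LinearMap.ker Ψ) ≃ₗ[ℤ] LinearMap.range Ψ :=
      Ψ.quotKerEquivRange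
    let E2 : LinearMap.range Ψ ≃ₗ[ℤ] Ap p := LinearEquiv.ofEq _ _ hΨrange
    refine ⟨E1.trans (Eq1.symm.trans (Eker.trans (Eq2.trans E2))), ?_⟩
    have he : ∀ (c : Submodule.span ℤ {v : Fin n → ℝ | ∃ i : ℕ, v = (g ^ i) γ})
        (x : Fin p → ℤ), Φ x = (c : Fin n → ℝ) →
        (((E1.trans (Eq1.symm.trans (Eker.trans (Eq2.trans E2)))) c : Fin p → ℤ)) = Ψ x := by
      intro c x hx
      have h2 : Eq1 (Submodule.Quotient.mk x) = E1 c := by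
        apply Subtype.ext
        rw [LinearMap.quotKerEquivRange_apply_mk]
        exact hx
      have h3 : Eq1.symm (E1 c) = Submodule.Quotient.mk x := by
        rw [← h2, LinearEquiv.symm_apply_apply]
      have h4 : ((E2 (Eq2 (Eker (Eq1.symm (E1 c))))) : Fin p → ℤ) = Ψ x := by
        rw [h3, Submodule.quotEquivOfEq_mk]
        have h5 : Eq2 (Submodule.Quotient.mk x) = ⟨Ψ x, ⟨x, rfl⟩⟩ := by
          apply Subtype.ext
          rw [LinearMap.quotKerEquivRange_apply_mk]
        rw [h5]
        rfl
      exact h4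
    intro a b
    obtain ⟨x, hx⟩ : ∃ x, Φ x = (a : Fin n → ℝ) := by
      have h9 : (a : Fin n → ℝ) ∈ LinearMap.range Φ := by rw [hΦrange]; exact a.2
      exact h9
    obtain ⟨y, hy⟩ : ∃ y, Φ y = (b : Fin n → ℝ) := by
      have h9 : (b : Fin n → ℝ) ∈ LinearMap.range Φ := by rw [hΦrange]; exact b.2
      exact h9
    have hea := he a x hx
    have heb := he b y hy
    rw [← hx, ← hy, hea, heb]
    exact hBG x y
end
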